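/- arXiv:2205.12913 — 6 statements merged into one kernel-verified Lean document; each statement's English description precedes it below -/
import Mathlib

section
/- Let f be a chief factor function. Then the class C(f) is a formation; that is: (i) if G is a finite group with G ∈ C(f) and N is a normal subgroup of G, then G/N ∈ C(f); and (ii) if G is a finite group with normal subgroups N and M such that N ∩ M = 1, G/N ∈ C(f) and G/M ∈ C(f), then G ∈ C(f). -/
/-! Common definitions: chief factors, G-isomorphism of chief factors, chief factor
functions, the class `C(f)`, classes of finite groups, formations, residuals,
relative centralizers, internal direct products, minimal normal subgroups,
(K-)𝔉-subnormality. -/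

/-- Conjugate of an element of a normal subgroup, as an element of the subgroup. -/
def normalConj {G : Type} [Group G] {H : Subgroup G} (hH : H.Normal) (g : G) (x : ↥H) : ↥H :=
  ⟨g * ↑x * g⁻¹, hH.conj_mem ↑x x.2 g⟩

/-- `H/K` is a chief factor of `G`: both are normal in `G`, `K < H`, and no normal
subgroup of `G` lies strictly between them. -/
def IsChiefFactor (G : Type) [Group G] (H K : Subgroup G) : Prop :=
  H.Normal ∧ K.Normal ∧ K < H ∧
    ∀ L : Subgroup G, L.Normal → K < L → L < H → False

/-- The factors `H/K` and `M/N` are `G`-isomorphic (auxiliary version taking normality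
proofs): there is a group isomorphism `φ : H/K ≃* M/N` commuting with the conjugation
action of `G` on both factors. -/
def GIsoAux (G : Type) [Group G] (H K M N : Subgroup G)
    (hH : H.Normal) (hK : K.Normal) (hM : M.Normal) (hN : N.Normal) : Prop :=
  haveI := hK.subgroupOf H
  haveI := hN.subgroupOf M
  ∃ φ : (↥H ⧸ K.subgroupOf H) ≃* (↥M ⧸ N.subgroupOf M),
    ∀ (g : G) (x : ↥H) (y : ↥M),
      φ (QuotientGroup.mk x) = QuotientGroup.mk y →
        φ (QuotientGroup.mk (normalConj hH g x)) = QuotientGroup.mk (normalConj hM g y)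

/-- The factors `H/K` and `M/N` are `G`-isomorphic. -/
def IsGIsomorphicFactors (G : Type) [Group G] (H K M N : Subgroup G) : Prop :=
  ∃ (hH : H.Normal) (hK : K.Normal) (hM : M.Normal) (hN : N.Normal),
    GIsoAux G H K M N hH hK hM hN

/-- The type of functions assigning a Boolean value (`true` = 1, `false` = 0) to each
finite group `G` and pair of subgroups `H`, `K` (thought of as the factor `H/K`). -/
abbrev ChiefFactorFun : Type 1 :=
  ∀ (G : Type) [Group G] [Finite G], Subgroup G → Subgroup G → Bool

/-- `f` is a chief factor function: it is invariant under `G`-isomorphism of chief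
factors and compatible with quotients. -/
structure IsChiefFactorFun (f : ChiefFactorFun) : Prop where
  iso_inv : ∀ (G : Type) [Group G] [Finite G] (H K M N : Subgroup G),
    IsChiefFactor G H K → IsChiefFactor G M N → IsGIsomorphicFactors G H K M N →
      f G H K = f G M N
  quot_inv : ∀ (G : Type) [Group G] [Finite G] (H K N : Subgroup G) [N.Normal],
    IsChiefFactor G H K → N ≤ K →
      f G H K = f (G ⧸ N) (H.map (QuotientGroup.mk' N)) (K.map (QuotientGroup.mk' N))

/-- `G ∈ C(f)`: every chief factor of `G` has value 1 under `f`. -/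
def CClass (f : ChiefFactorFun) (G : Type) [Group G] [Finite G] : Prop :=
  ∀ H K : Subgroup G, IsChiefFactor G H K → f G H K = true

/-- `G/L ∈ C(f)`, for a normal subgroup `L` of `G`. -/
def CClassQuot (f : ChiefFactorFun) (G : Type) [Group G] [Finite G]
    (L : Subgroup G) (hL : L.Normal) : Prop :=
  haveI := hL
  CClass f (G ⧸ L)

open scoped commutatorElement

/-- The centralizer `C_G(H/K) = {g : G | [g,h] ∈ K for all h ∈ H}` of the factor
`H/K` in `G` (for `K` normal in `G`). -/
def relCentralizer {G : Type} [Group G] (H K : Subgroup G) (hK : K.Normal) : Subgroup G where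
  carrier := {g : G | ∀ x ∈ H, ⁅g, x⁆ ∈ K}
  one_mem' := by
    intro x hx
    have h1 : ⁅(1 : G), x⁆ = 1 := by group
    rw [h1]; exact K.one_mem
  mul_mem' := by
    intro a b ha hb x hx
    have h1 : ⁅a * b, x⁆ = a * ⁅b, x⁆ * a⁻¹ * ⁅a, x⁆ := by group
    rw [h1]
    exact K.mul_mem (hK.conj_mem _ (hb x hx) a) (ha x hx)
  inv_mem' := by
    intro a ha x hx
    have h1 : ⁅a⁻¹, x⁆ = a⁻¹ * ⁅a, x⁆⁻¹ * a⁻¹⁻¹ := by group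
    rw [h1]
    exact hK.conj_mem _ (K.inv_mem (ha x hx)) a⁻¹

/-- A class of finite groups, given as a predicate on finite group types. -/
abbrev GroupClass : Type 1 := ∀ (G : Type) [Group G] [Finite G], Prop

/-- The class `𝔛` is non-empty. -/
def GroupClassNonempty (𝔛 : GroupClass) : Prop :=
  ∃ (G : Type) (g : Group G) (f : Finite G), @𝔛 G g f

/-- `G/L ∈ 𝔛`, for a normal subgroup `L` of `G`. -/
def QuotientIn (𝔛 : GroupClass) (G : Type) [Group G] [Finite G]
    (L : Subgroup G) (hL : L.Normal) : Prop :=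
  haveI := hL
  𝔛 (G ⧸ L)

/-- `𝔛` is a formation: a class of finite groups (closed under isomorphism) which is
closed under taking quotients and under subdirect products. -/
structure IsFormation (𝔛 : GroupClass) : Prop where
  iso_closed : ∀ (G : Type) [Group G] [Finite G] (H : Type) [Group H] [Finite H],
    (G ≃* H) → 𝔛 G → 𝔛 H
  quot_closed : ∀ (G : Type) [Group G] [Finite G] (N : Subgroup G) [N.Normal],
    𝔛 G → 𝔛 (G ⧸ N)
  subdirect_closed : ∀ (G : Type) [Group G] [Finite G] (N M : Subgroup G)
    [N.Normal] [M.Normal], N ⊓ M = ⊥ → 𝔛 (G ⧸ N) → 𝔛 (G ⧸ M) → 𝔛 G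

/-- `𝔛` is hereditary: closed under taking subgroups. -/
def IsHereditary (𝔛 : GroupClass) : Prop :=
  ∀ (G : Type) [Group G] [Finite G], 𝔛 G → ∀ H : Subgroup G, 𝔛 ↥H

/-- `R` is the `𝔛`-residual of `G`: the smallest normal subgroup of `G` whose
quotient lies in `𝔛`. -/
def IsResidual (𝔛 : GroupClass) (G : Type) [Group G] [Finite G] (R : Subgroup G) : Prop :=
  ∃ hR : R.Normal, QuotientIn 𝔛 G R hR ∧
    ∀ (L : Subgroup G) (hL : L.Normal), QuotientIn 𝔛 G L hL → R ≤ L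

/-- `A` is the internal direct product of the family of subgroups `B i`: each `B i`
is a subgroup of `A` normal in `A`, together they generate `A`, and each of them
intersects the subgroup generated by the others trivially. -/
def IsInternalDirectProduct {G : Type} [Group G] (A : Subgroup G)
    {ι : Type} (B : ι → Subgroup G) : Prop :=
  (∀ i, B i ≤ A) ∧ (∀ i, ((B i).subgroupOf A).Normal) ∧ (⨆ i, B i) = A ∧
    ∀ i, B i ⊓ (⨆ (j) (_ : j ≠ i), B j) = ⊥

/-- A non-abelian simple group. -/
def IsNonabelianSimple (S : Type) [Group S] : Prop :=
  IsSimpleGroup S ∧ ∃ x y : S, x * y ≠ y * x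

/-- `A` is a minimal normal subgroup of `G`. -/
def IsMinimalNormal {G : Type} [Group G] (A : Subgroup G) : Prop :=
  A.Normal ∧ A ≠ ⊥ ∧ ∀ B : Subgroup G, B.Normal → B ≤ A → B ≠ ⊥ → B = A

/-- `H` is a subnormal subgroup of `G`. -/
def IsSubnormal (G : Type) [Group G] (H : Subgroup G) : Prop :=
  ∃ (n : ℕ) (c : ℕ → Subgroup G), c 0 = H ∧ c n = ⊤ ∧
    ∀ i < n, c i ≤ c (i + 1) ∧ ((c i).subgroupOf (c (i + 1))).Normal

/-- One step in a K-`𝔉`-subnormal chain: `A ≤ B`, and either `A` is normal in `B` or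
`B / Core_B(A) ∈ 𝔉`. -/
def KFStep (𝔛 : GroupClass) {G : Type} [Group G] [Finite G] (A B : Subgroup G) : Prop :=
  A ≤ B ∧ ((A.subgroupOf B).Normal ∨ 𝔛 (↥B ⧸ (A.subgroupOf B).normalCore))

/-- `H` is a K-`𝔉`-subnormal subgroup of `G`. -/
def IsKFSubnormal (𝔛 : GroupClass) (G : Type) [Group G] [Finite G] (H : Subgroup G) : Prop :=
  ∃ (n : ℕ) (c : ℕ → Subgroup G), c 0 = H ∧ c n = ⊤ ∧
    ∀ i < n, KFStep 𝔛 (c i) (c (i + 1))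

/-- One step in an `𝔉`-subnormal chain (for hereditary `𝔉`): `A < B` and
`B / Core_B(A) ∈ 𝔉`. -/
def FStep (𝔛 : GroupClass) {G : Type} [Group G] [Finite G] (A B : Subgroup G) : Prop :=
  A < B ∧ 𝔛 (↥B ⧸ (A.subgroupOf B).normalCore)

/-- `H` is an `𝔉`-subnormal subgroup of `G` (for hereditary `𝔉`). -/
def IsFSubnormal (𝔛 : GroupClass) (G : Type) [Group G] [Finite G] (H : Subgroup G) : Prop :=
  H = ⊤ ∨ ∃ (n : ℕ) (c : ℕ → Subgroup G), c 0 = H ∧ c n = ⊤ ∧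
    ∀ i < n, FStep 𝔛 (c i) (c (i + 1))


section AuxLemmas

open Subgroup QuotientGroup
open scoped Pointwise

variable {G : Type} [Group G]

/-- Dedekind's modular law for subgroups, with `B` normal. -/
lemma my_dedekind (A B C : Subgroup G) [B.Normal] (hAC : A ≤ C) :
    A ⊔ (B ⊓ C) = (A ⊔ B) ⊓ C := by
  refine le_antisymm (sup_le (le_inf le_sup_left hAC)
    (le_inf (inf_le_left.trans le_sup_right) inf_le_right)) ?_
  intro x hx
  rw [Subgroup.mem_inf] at hx
  obtain ⟨hxAB, hxC⟩ := hx
  have hx' : x ∈ (A : Set G) * (B : Set G) := by rw [← Subgroup.mul_normal]; exact hxAB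
  obtain ⟨a, ha, b, hb, rfl⟩ := hx'
  have hbC : b ∈ C := by
    have := mul_mem (inv_mem (hAC ha)) hxC
    simpa [mul_assoc] using this
  exact Subgroup.mul_mem _ (Subgroup.mem_sup_left ha)
    (Subgroup.mem_sup_right (Subgroup.mem_inf.mpr ⟨hb, hbC⟩))

/-- The chief-factor property transfers between `A/(A ⊓ K)` and `(A ⊔ K)/K`. -/
lemma chief_transfer (A K H : Subgroup G) (hA : A.Normal) (hK : K.Normal)
    (hsup : A ⊔ K = H) (hnle : ¬ A ≤ K) :
    IsChiefFactor G A (A ⊓ K) ↔ IsChiefFactor G H K := by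
  haveI := hA; haveI := hK
  have hKH : K ≤ H := hsup ▸ le_sup_right
  have hAH : A ≤ H := hsup ▸ le_sup_left
  have hHn : H.Normal := hsup ▸ inferInstance
  constructor
  · rintro ⟨-, -, hlt, hchief⟩
    refine ⟨hHn, hK, lt_of_le_of_ne hKH (fun h => hnle (hAH.trans h.ge)), ?_⟩
    intro L hL hKL hLH
    haveI := hL
    refine hchief (L ⊓ A) inferInstance ?_ ?_
    · refine lt_of_le_of_ne
        (le_inf (inf_le_right.trans hKL.le) inf_le_left) (fun h => hKL.ne' ?_)
      -- if A ⊓ K = L ⊓ A then L = K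
      have h1 : K ⊔ (A ⊓ L) = (K ⊔ A) ⊓ L := my_dedekind K A L hKL.le
      have h3 : A ⊓ L = A ⊓ K := by rw [inf_comm]; exact h.symm
      rw [h3, sup_eq_left.mpr (inf_le_right : A ⊓ K ≤ K), sup_comm K A, hsup,
        inf_eq_right.mpr hLH.le] at h1
      exact h1.symm
    · refine lt_of_le_of_ne inf_le_right (fun h => hLH.ne ?_)
      have hAL : A ≤ L := by rw [← h]; exact inf_le_left
      exact le_antisymm hLH.le (hsup ▸ sup_le hAL hKL.le)
  · rintro ⟨-, -, hKHlt, hchief⟩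
    refine ⟨hA, inferInstance, lt_of_le_of_ne inf_le_left
      (fun h => hnle (h ▸ (inf_le_right : A ⊓ K ≤ K))), ?_⟩
    intro L hL hlow hhigh
    haveI := hL
    refine hchief (L ⊔ K) inferInstance ?_ ?_
    · refine lt_of_le_of_ne le_sup_right (fun h => hlow.ne' ?_)
      have hLK : L ≤ K := by rw [h]; exact le_sup_left
      exact le_antisymm (le_inf hhigh.le hLK) hlow.le
    · refine lt_of_le_of_ne (hsup ▸ sup_le (hhigh.le.trans le_sup_left) le_sup_right)
        (fun h => hhigh.ne ?_)
      have h1 : L ⊔ (K ⊓ A) = (L ⊔ K) ⊓ A := my_dedekind L K A hhigh.le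
      rw [h, inf_eq_right.mpr hAH, inf_comm K A, sup_eq_left.mpr hlow.le] at h1
      exact h1

/-- The natural `G`-isomorphism `A/(A ⊓ K) ≅ (A ⊔ K)/K`. -/
lemma gIso_of_sup (A K H : Subgroup G) (hA : A.Normal) (hK : K.Normal) (hH : H.Normal)
    (hle : A ≤ H) (hsup : A ⊔ K = H) :
    IsGIsomorphicFactors G A (A ⊓ K) H K := by
  haveI := hA; haveI := hK; haveI := hH
  have hKH : K ≤ H := hsup ▸ le_sup_right
  refine ⟨hA, inferInstance, hH, hK, ?_⟩
  haveI : ((A ⊓ K).subgroupOf A).Normal := Subgroup.Normal.subgroupOf inferInstance A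
  haveI : (K.subgroupOf H).Normal := Subgroup.Normal.subgroupOf hK H
  set ψ : ↥A →* ↥H ⧸ K.subgroupOf H :=
    (QuotientGroup.mk' (K.subgroupOf H)).comp (Subgroup.inclusion hle) with hψ
  have hψ_apply : ∀ x : ↥A, ψ x = QuotientGroup.mk (⟨(x : G), hle x.2⟩ : ↥H) := by
    intro x; rfl
  have hker : ∀ x : ↥A, x ∈ (A ⊓ K).subgroupOf A ↔ ψ x = 1 := by
    intro x
    rw [hψ_apply, QuotientGroup.eq_one_iff, Subgroup.mem_subgroupOf,
      Subgroup.mem_subgroupOf]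
    simp [Subgroup.mem_inf, x.2]
  set F : (↥A ⧸ (A ⊓ K).subgroupOf A) →* (↥H ⧸ K.subgroupOf H) :=
    QuotientGroup.lift _ ψ (fun x hx => (hker x).mp hx) with hF
  have hF_mk : ∀ x : ↥A, F (QuotientGroup.mk x) = QuotientGroup.mk (⟨(x : G), hle x.2⟩ : ↥H) :=
    fun x => hψ_apply x
  have hinj : Function.Injective F := by
    rw [injective_iff_map_eq_one]
    intro q
    induction q using QuotientGroup.induction_on with
    | H x =>
      intro hx
      change ψ x = 1 at hx
      exact (QuotientGroup.eq_one_iff x).mpr ((hker x).mpr hx)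
  have hsurj : Function.Surjective F := by
    intro q
    induction q using QuotientGroup.induction_on with
    | H h =>
      have hmem : (h : G) ∈ (↑A * ↑K : Set G) := by
        rw [← Subgroup.mul_normal, hsup]; exact h.2
      obtain ⟨a, ha, k, hk, hak⟩ := hmem
      refine ⟨QuotientGroup.mk ⟨a, ha⟩, ?_⟩
      rw [hF_mk]
      refine (QuotientGroup.eq).mpr ?_
      rw [Subgroup.mem_subgroupOf]
      show a⁻¹ * (h : G) ∈ K
      rw [← hak]
      simpa [mul_assoc] using hk
  refine ⟨MulEquiv.ofBijective F ⟨hinj, hsurj⟩, ?_⟩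
  intro g x y hxy
  have hx : MulEquiv.ofBijective F ⟨hinj, hsurj⟩ (QuotientGroup.mk x)
      = QuotientGroup.mk (⟨(x : G), hle x.2⟩ : ↥H) := hF_mk x
  rw [hx] at hxy
  have hxy' : (x : G)⁻¹ * (y : G) ∈ K := by
    have := (QuotientGroup.eq).mp hxy
    rwa [Subgroup.mem_subgroupOf] at this
  have hgoal : MulEquiv.ofBijective F ⟨hinj, hsurj⟩ (QuotientGroup.mk (normalConj hA g x))
      = QuotientGroup.mk (⟨(g * (x : G) * g⁻¹ : G), hle (hA.conj_mem _ x.2 g)⟩ : ↥H) :=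
    hF_mk _
  rw [hgoal]
  refine (QuotientGroup.eq).mpr ?_
  rw [Subgroup.mem_subgroupOf]
  show (g * (x : G) * g⁻¹)⁻¹ * (g * (y : G) * g⁻¹) ∈ K
  have : (g * (x : G) * g⁻¹)⁻¹ * (g * (y : G) * g⁻¹) = g * ((x : G)⁻¹ * y) * g⁻¹ := by
    group
  rw [this]
  exact hK.conj_mem _ hxy' g

variable (N : Subgroup G) [N.Normal]

/-- Image of a chief factor above `N` is a chief factor of `G/N`. -/
lemma chief_map (H K : Subgroup G) (hNK : N ≤ K) (hc : IsChiefFactor G H K) :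
    IsChiefFactor (G ⧸ N) (H.map (QuotientGroup.mk' N)) (K.map (QuotientGroup.mk' N)) := by
  obtain ⟨hH, hK, hKH, hchief⟩ := hc
  have hsurj := QuotientGroup.mk'_surjective N
  have hcm : ∀ (L : Subgroup G), N ≤ L →
      (L.map (QuotientGroup.mk' N)).comap (QuotientGroup.mk' N) = L := by
    intro L hL
    rw [Subgroup.comap_map_eq, QuotientGroup.ker_mk', sup_eq_left.mpr hL]
  refine ⟨hH.map _ hsurj, hK.map _ hsurj, ?_, ?_⟩
  · refine lt_of_le_of_ne (Subgroup.map_mono hKH.le) (fun h => hKH.ne ?_)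
    rw [← hcm K hNK, ← hcm H (hNK.trans hKH.le), h]
  · intro L' hL' hKL' hLH'
    set L := L'.comap (QuotientGroup.mk' N) with hLdef
    haveI := hL'
    have hLn : L.Normal := Subgroup.Normal.comap hL' _
    have hmapL : L.map (QuotientGroup.mk' N) = L' :=
      Subgroup.map_comap_eq_self_of_surjective hsurj L'
    refine hchief L hLn ?_ ?_
    · refine lt_of_le_of_ne ?_ (fun h => hKL'.ne ?_)
      · rw [← hcm K hNK]; exact Subgroup.comap_mono hKL'.le
      · rw [← hmapL, ← h]
    · refine lt_of_le_of_ne ?_ (fun h => hLH'.ne ?_)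
      · rw [← hcm H (hNK.trans hKH.le)]; exact Subgroup.comap_mono hLH'.le
      · rw [← hmapL, h]

/-- Preimage of a chief factor of `G/N` is a chief factor of `G` above `N`. -/
lemma chief_comap (H' K' : Subgroup (G ⧸ N)) (hc : IsChiefFactor (G ⧸ N) H' K') :
    IsChiefFactor G (H'.comap (QuotientGroup.mk' N)) (K'.comap (QuotientGroup.mk' N)) ∧
      N ≤ K'.comap (QuotientGroup.mk' N) := by
  obtain ⟨hH', hK', hKH', hchief⟩ := hc
  have hsurj := QuotientGroup.mk'_surjective N
  have hNle : ∀ L' : Subgroup (G ⧸ N), N ≤ L'.comap (QuotientGroup.mk' N) := by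
    intro L' x hx
    rw [Subgroup.mem_comap]
    have : (QuotientGroup.mk' N) x = 1 := (QuotientGroup.eq_one_iff x).mpr hx
    rw [this]; exact L'.one_mem
  have hmc : ∀ L' : Subgroup (G ⧸ N),
      (L'.comap (QuotientGroup.mk' N)).map (QuotientGroup.mk' N) = L' :=
    fun L' => Subgroup.map_comap_eq_self_of_surjective hsurj L'
  refine ⟨⟨Subgroup.Normal.comap hH' _, Subgroup.Normal.comap hK' _, ?_, ?_⟩, hNle K'⟩
  · exact lt_of_le_of_ne (Subgroup.comap_mono hKH'.le)
      (fun h => hKH'.ne (Subgroup.comap_injective hsurj h))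
  · intro L hL hKL hLH
    haveI := hL
    refine hchief (L.map (QuotientGroup.mk' N)) (hL.map _ hsurj) ?_ ?_
    · refine lt_of_le_of_ne ?_ (fun h => hKL.ne ?_)
      · rw [← hmc K']; exact Subgroup.map_mono hKL.le
      · have : (L.map (QuotientGroup.mk' N)).comap (QuotientGroup.mk' N) = L := by
          rw [Subgroup.comap_map_eq, QuotientGroup.ker_mk',
            sup_eq_left.mpr ((hNle K').trans hKL.le)]
        rw [← this, h]
    · refine lt_of_le_of_ne ?_ (fun h => hLH.ne ?_)
      · rw [← hmc H']; exact Subgroup.map_mono hLH.le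
      · have : (L.map (QuotientGroup.mk' N)).comap (QuotientGroup.mk' N) = L := by
          rw [Subgroup.comap_map_eq, QuotientGroup.ker_mk',
            sup_eq_left.mpr ((hNle K').trans hKL.le)]
        rw [← this, h]

end AuxLemmas

/-- Key lemma: if `G/L ∈ C(f)` and `H/K` is a chief factor of `G` with
`H ⊓ (K ⊔ L) = K`, then `f G H K = 1`. -/
lemma key_lemma (f : ChiefFactorFun) (hf : IsChiefFactorFun f)
    (G : Type) [Group G] [Finite G] (L H K : Subgroup G) [hL : L.Normal]
    (hQ : CClass f (G ⧸ L)) (hc : IsChiefFactor G H K)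
    (hinf : H ⊓ (K ⊔ L) = K) : f G H K = true := by
  obtain ⟨hH, hK, hKH, hchief⟩ := hc
  haveI := hH; haveI := hK
  have hnle : ¬ H ≤ K ⊔ L := fun h => hKH.ne (hinf.symm.trans (inf_eq_left.mpr h))
  have ht := chief_transfer H (K ⊔ L) (H ⊔ (K ⊔ L)) hH inferInstance rfl hnle
  rw [hinf] at ht
  have hbig : IsChiefFactor G (H ⊔ (K ⊔ L)) (K ⊔ L) := ht.mp ⟨hH, hK, hKH, hchief⟩
  have hiso := gIso_of_sup H (K ⊔ L) (H ⊔ (K ⊔ L)) hH inferInstance inferInstance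
    le_sup_left rfl
  rw [hinf] at hiso
  have h1 := hf.iso_inv G H K (H ⊔ (K ⊔ L)) (K ⊔ L) ⟨hH, hK, hKH, hchief⟩ hbig hiso
  have h2 := hf.quot_inv G (H ⊔ (K ⊔ L)) (K ⊔ L) L hbig le_sup_right
  rw [h1, h2]
  exact hQ _ _ (chief_map L (H ⊔ (K ⊔ L)) (K ⊔ L) le_sup_right hbig)

/-- If `f` is a chief factor function, then `C(f)` is a formation:
it is closed under taking quotients and under subdirect products. -/
theorem stmt0 (f : ChiefFactorFun) (hf : IsChiefFactorFun f) :
    (∀ (G : Type) [Group G] [Finite G] (N : Subgroup G) [N.Normal],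
        CClass f G → CClass f (G ⧸ N)) ∧
    (∀ (G : Type) [Group G] [Finite G] (N M : Subgroup G) [N.Normal] [M.Normal],
        N ⊓ M = ⊥ → CClass f (G ⧸ N) → CClass f (G ⧸ M) → CClass f G) := by
  constructor
  · intro G _ _ N _ hG H' K' hc'
    obtain ⟨hcomap, hNK⟩ := chief_comap N H' K' hc'
    have hsurj := QuotientGroup.mk'_surjective N
    have h1 := hf.quot_inv G (H'.comap (QuotientGroup.mk' N)) (K'.comap (QuotientGroup.mk' N))
      N hcomap hNK
    rw [Subgroup.map_comap_eq_self_of_surjective hsurj,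
      Subgroup.map_comap_eq_self_of_surjective hsurj] at h1
    rw [← h1]
    exact hG _ _ hcomap
  · intro G _ _ N M _ _ hNM hQN hQM H K hc
    obtain ⟨hH, hK, hKH, hchief⟩ := hc
    haveI := hH; haveI := hK
    have hPH : K ⊔ (H ⊓ N) ≤ H := sup_le hKH.le inf_le_left
    by_cases hP : K ⊔ (H ⊓ N) = H
    · -- `H = K(H ⊓ N)`; pass to the factor `(H ⊓ N)/(H ⊓ N ⊓ K)` and use `G/M`
      have hnleA : ¬ H ⊓ N ≤ K := by
        intro h
        exact hKH.ne ((sup_eq_left.mpr h).symm.trans hP)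
      have hsupA : (H ⊓ N) ⊔ K = H := by rw [sup_comm]; exact hP
      have hchiefA : IsChiefFactor G (H ⊓ N) ((H ⊓ N) ⊓ K) :=
        (chief_transfer (H ⊓ N) K H inferInstance hK hsupA hnleA).mpr ⟨hH, hK, hKH, hchief⟩
      have hiso := gIso_of_sup (H ⊓ N) K H inferInstance hK hH inf_le_left hsupA
      have heq := hf.iso_inv G (H ⊓ N) ((H ⊓ N) ⊓ K) H K hchiefA ⟨hH, hK, hKH, hchief⟩ hiso
      rw [← heq]
      refine key_lemma f hf G M (H ⊓ N) ((H ⊓ N) ⊓ K) hQM hchiefA ?_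
      have hMA : M ⊓ (H ⊓ N) = ⊥ := by
        rw [← le_bot_iff, ← hNM]
        exact le_inf (inf_le_right.trans inf_le_right) inf_le_left
      have hd := my_dedekind ((H ⊓ N) ⊓ K) M (H ⊓ N)
        (inf_le_left : (H ⊓ N) ⊓ K ≤ H ⊓ N)
      rw [hMA, sup_bot_eq] at hd
      rw [inf_comm, ← hd]
    · -- `H ⊓ N ≤ K`; use `G/N`
      have hPK : K ⊔ (H ⊓ N) = K := by
        by_contra h
        exact hchief (K ⊔ (H ⊓ N)) inferInstance
          (lt_of_le_of_ne le_sup_left (Ne.symm h)) (lt_of_le_of_ne hPH hP)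
      refine key_lemma f hf G N H K hQN ⟨hH, hK, hKH, hchief⟩ ?_
      have hd := my_dedekind K N H hKH.le
      rw [inf_comm N H, hPK] at hd
      rw [inf_comm, ← hd]
end

section
/- Let G be a finite group and let A be a normal subgroup of G which is an internal direct product of non-abelian simple subgroups. Then there exist minimal normal subgroups A₁, …, A_k of G such that A is the internal direct product of A₁, …, A_k. -/
open scoped commutatorElement

namespace Stmt5Aux

variable {G : Type} [Group G]

/-- Conjugate of a subgroup, by hand. -/
def conj' (g : G) (H : Subgroup G) : Subgroup G where
  carrier := {x | g⁻¹ * x * g ∈ H}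
  one_mem' := by simpa using H.one_mem
  mul_mem' := by
    intro a b ha hb
    have h : g⁻¹ * (a * b) * g = (g⁻¹ * a * g) * (g⁻¹ * b * g) := by group
    show g⁻¹ * (a * b) * g ∈ H
    rw [h]; exact H.mul_mem ha hb
  inv_mem' := by
    intro a ha
    have h : g⁻¹ * a⁻¹ * g = (g⁻¹ * a * g)⁻¹ := by group
    show g⁻¹ * a⁻¹ * g ∈ H
    rw [h]; exact H.inv_mem ha

lemma mem_conj' {g x : G} {H : Subgroup G} : x ∈ conj' g H ↔ g⁻¹ * x * g ∈ H := Iff.rfl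

lemma conj'_one (H : Subgroup G) : conj' 1 H = H := by
  ext x; simp [mem_conj']

lemma conj'_mul (a b : G) (H : Subgroup G) : conj' a (conj' b H) = conj' (a * b) H := by
  ext x
  simp only [mem_conj']
  constructor <;> intro h
  · have e : (a*b)⁻¹ * x * (a*b) = b⁻¹ * (a⁻¹ * x * a) * b := by group
    rwa [e]
  · have e : (a*b)⁻¹ * x * (a*b) = b⁻¹ * (a⁻¹ * x * a) * b := by group
    rwa [← e]

lemma conj'_mono (g : G) {H K : Subgroup G} (h : H ≤ K) : conj' g H ≤ conj' g K :=
  fun _ hx => h hx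

lemma conj'_inv_conj' (g : G) (H : Subgroup G) : conj' g⁻¹ (conj' g H) = H := by
  rw [conj'_mul, inv_mul_cancel, conj'_one]

lemma conj'_le_iff {g : G} {H K : Subgroup G} : conj' g H ≤ K ↔ H ≤ conj' g⁻¹ K := by
  constructor
  · intro h
    have := conj'_mono g⁻¹ h
    rwa [conj'_inv_conj'] at this
  · intro h
    have := conj'_mono g h
    rwa [conj'_mul, mul_inv_cancel, conj'_one] at this

lemma conj'_bot (g : G) : conj' g (⊥ : Subgroup G) = ⊥ := by
  ext x
  simp only [mem_conj', Subgroup.mem_bot]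
  constructor
  · intro h
    have : x = g * 1 * g⁻¹ := by rw [← h]; group
    simpa using this
  · rintro rfl; group

lemma normal_of_conj'_le {N : Subgroup G} (h : ∀ g, conj' g N ≤ N) : N.Normal := by
  constructor
  intro n hn g
  have hx : g * n * g⁻¹ ∈ conj' g N := by
    show g⁻¹ * (g * n * g⁻¹) * g ∈ N
    have e : g⁻¹ * (g * n * g⁻¹) * g = n := by group
    rwa [e]
  exact h g hx

lemma conj'_eq_of_normal {N : Subgroup G} (hN : N.Normal) (g : G) : conj' g N = N := by
  ext x
  simp only [mem_conj']
  constructor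
  · intro h
    have := hN.conj_mem _ h g
    have e : g * (g⁻¹ * x * g) * g⁻¹ = x := by group
    rwa [e] at this
  · intro h
    have := hN.conj_mem _ h g⁻¹
    have e : g⁻¹ * x * g⁻¹⁻¹ = g⁻¹ * x * g := by group
    rwa [e] at this

/-- product decomposition for commuting subgroups -/
lemma comm_sup_mem {B C : Subgroup G} (h : ∀ b ∈ B, ∀ c ∈ C, Commute b c) :
    ∀ z ∈ B ⊔ C, ∃ b ∈ B, ∃ c ∈ C, z = b * c := by
  let K : Subgroup G :=
    { carrier := {z | ∃ b ∈ B, ∃ c ∈ C, z = b * c}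
      one_mem' := ⟨1, B.one_mem, 1, C.one_mem, (one_mul 1).symm⟩
      mul_mem' := by
        rintro x y ⟨b1, hb1, c1, hc1, rfl⟩ ⟨b2, hb2, c2, hc2, rfl⟩
        refine ⟨b1 * b2, B.mul_mem hb1 hb2, c1 * c2, C.mul_mem hc1 hc2, ?_⟩
        have hc : c1 * b2 = b2 * c1 := (h b2 hb2 c1 hc1).symm
        calc b1 * c1 * (b2 * c2) = b1 * (c1 * b2) * c2 := by group
        _ = b1 * (b2 * c1) * c2 := by rw [hc]
        _ = b1 * b2 * (c1 * c2) := by group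
      inv_mem' := by
        rintro x ⟨b, hb, c, hc, rfl⟩
        refine ⟨b⁻¹, B.inv_mem hb, c⁻¹, C.inv_mem hc, ?_⟩
        have := ((h b hb c hc).inv_inv).eq
        rw [mul_inv_rev, ← this] }
  have hBK : B ≤ K := fun b hb => ⟨b, hb, 1, C.one_mem, (mul_one b).symm⟩
  have hCK : C ≤ K := fun c hc => ⟨1, B.one_mem, c, hc, (one_mul c).symm⟩
  intro z hz
  exact sup_le hBK hCK hz


lemma simple_central_eq_one {H : Subgroup G}
    (hsimp : IsSimpleGroup ↥H) (hna : ∃ x y : ↥H, x * y ≠ y * x) :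
    ∀ b ∈ H, (∀ y ∈ H, Commute b y) → b = 1 := by
  intro b hb hcom
  haveI := hsimp
  have hz : (⟨b, hb⟩ : ↥H) ∈ Subgroup.center ↥H := by
    rw [Subgroup.mem_center_iff]
    intro g
    ext
    exact (hcom g.1 g.2).eq.symm
  have hnc : (Subgroup.center ↥H).Normal := by
    constructor
    intro z hz g
    have e : g * z * g⁻¹ = z := by rw [Subgroup.mem_center_iff] at hz; rw [hz g]; group
    rwa [e]
  rcases hnc.eq_bot_or_eq_top with h | h
  · rw [h] at hz
    simpa using congrArg Subtype.val (Subgroup.mem_bot.mp hz)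
  · obtain ⟨x, y, hxy⟩ := hna
    exact absurd ((Subgroup.mem_center_iff.mp (h ▸ Subgroup.mem_top x) y).symm) hxy

lemma subgroupOf_normal_of_normal {N A : Subgroup G} (hN : N.Normal) :
    (N.subgroupOf A).Normal := by
  constructor
  intro n hn g
  simp only [Subgroup.mem_subgroupOf] at *
  simpa using hN.conj_mem _ hn g.1

end Stmt5Aux

open Stmt5Aux in
/-- The conjugation-orbit relation on the index set of simple factors. -/
def orel {G : Type} [Group G] {ι : Type} (S : ι → Subgroup G) (i j : ι) : Prop :=
  ∃ g : G, conj' g (S i) = S j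

/-- The product of an orbit of simple factors. -/
def oprod {G : Type} [Group G] {ι : Type} (S : ι → Subgroup G) (i : ι) : Subgroup G :=
  ⨆ j, ⨆ (_ : orel S i j), S j

namespace Stmt5Aux

variable {G : Type} [Group G] {ι : Type} {S : ι → Subgroup G}

lemma orel_refl (S : ι → Subgroup G) (i : ι) : orel S i i := ⟨1, conj'_one _⟩

lemma orel_symm {i j : ι} (h : orel S i j) : orel S j i := by
  obtain ⟨g, hg⟩ := h
  exact ⟨g⁻¹, by rw [← hg, conj'_inv_conj']⟩

lemma orel_trans {i j k : ι} (h1 : orel S i j) (h2 : orel S j k) : orel S i k := by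
  obtain ⟨g, hg⟩ := h1
  obtain ⟨g', hg'⟩ := h2
  exact ⟨g' * g, by rw [← conj'_mul, hg, hg']⟩

lemma le_supP {ι : Type} (S : ι → Subgroup G) (p : ι → Prop) (i : ι) (h : p i) :
    S i ≤ ⨆ j, ⨆ (_ : p j), S j :=
  le_iSup_of_le i (le_iSup (fun _ : p i => S i) h)

lemma conj'_conj'_inv (g : G) (H : Subgroup G) : conj' g (conj' g⁻¹ H) = H := by
  rw [conj'_mul, mul_inv_cancel, conj'_one]

end Stmt5Aux

-- MARKER: theorem part (appended to defs + aux for testing)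
set_option maxHeartbeats 1000000 in
open Stmt5Aux in
/-- If `A` is a normal subgroup of a finite group `G` which is an
internal direct product of non-abelian simple subgroups, then there are minimal
normal subgroups `A₁, …, A_k` of `G` such that `A` is the internal direct product
of `A₁, …, A_k`. -/
theorem stmt5 (G : Type) [Group G] [Finite G] (A : Subgroup G) (hA : A.Normal)
    (ι : Type) (S : ι → Subgroup G) (hS : ∀ i, IsNonabelianSimple ↥(S i))
    (hdp : IsInternalDirectProduct A S) :
    ∃ (k : ℕ) (C : Fin k → Subgroup G),
      (∀ i, IsMinimalNormal (C i)) ∧ IsInternalDirectProduct A C := by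
  classical
  obtain ⟨hle, hnormA, hsup, hdisj⟩ := hdp
  -- each simple factor is nontrivial
  have hSne : ∀ i, S i ≠ ⊥ := by
    intro i hbot
    haveI := (hS i).1
    obtain ⟨x, y, hxy⟩ := exists_pair_ne ↥(S i)
    apply hxy
    rw [Subgroup.eq_bot_iff_forall] at hbot
    exact Subtype.ext ((hbot _ x.2).trans (hbot _ y.2).symm)
  -- the simple factors are invariant under conjugation by elements of A
  have hAinvS : ∀ i, ∀ a ∈ A, ∀ x ∈ S i, a * x * a⁻¹ ∈ S i := by
    intro i a ha x hx
    have h1 : (⟨x, hle i hx⟩ : ↥A) ∈ (S i).subgroupOf A := by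
      rwa [Subgroup.mem_subgroupOf]
    have h2 := (hnormA i).conj_mem _ h1 ⟨a, ha⟩
    rw [Subgroup.mem_subgroupOf] at h2
    simpa using h2
  -- distinct simple factors commute elementwise
  have hcomm : ∀ i j, i ≠ j → ∀ x ∈ S i, ∀ y ∈ S j, Commute x y := by
    intro i j hij x hx y hy
    have hSj_le : S j ≤ ⨆ k, ⨆ (_ : k ≠ i), S k :=
      le_supP S (fun k => k ≠ i) j (Ne.symm hij)
    have hc : x * y * x⁻¹ * y⁻¹ ∈ S i ⊓ (⨆ k, ⨆ (_ : k ≠ i), S k) := by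
      constructor
      · have h1 : y * x⁻¹ * y⁻¹ ∈ S i := hAinvS i y (hle j hy) x⁻¹ ((S i).inv_mem hx)
        have e : x * y * x⁻¹ * y⁻¹ = x * (y * x⁻¹ * y⁻¹) := by group
        rw [e]; exact (S i).mul_mem hx h1
      · have h1 : x * y * x⁻¹ ∈ S j := hAinvS j x (hle i hx) y hy
        exact hSj_le ((S j).mul_mem h1 ((S j).inv_mem hy))
    rw [hdisj i, Subgroup.mem_bot] at hc
    show x * y = y * x
    have e : x * y = (x * y * x⁻¹ * y⁻¹) * (y * x) := by group
    rw [e, hc, one_mul]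
  -- minimality of each simple factor among A-invariant subgroups
  have hmin : ∀ i (N : Subgroup G), (∀ a ∈ A, ∀ n ∈ N, a * n * a⁻¹ ∈ N) → N ≤ S i →
      N = ⊥ ∨ N = S i := by
    intro i N hNinv hNle
    haveI := (hS i).1
    have hnorm : (N.subgroupOf (S i)).Normal := by
      constructor
      intro n hn g
      rw [Subgroup.mem_subgroupOf] at hn ⊢
      simpa using hNinv g.1 (hle i g.2) n.1 hn
    rcases hnorm.eq_bot_or_eq_top with h | h
    · left
      rw [eq_bot_iff]
      intro x hx
      have hx2 : (⟨x, hNle hx⟩ : ↥(S i)) ∈ N.subgroupOf (S i) := by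
        rwa [Subgroup.mem_subgroupOf]
      rw [h, Subgroup.mem_bot] at hx2
      rw [Subgroup.mem_bot]
      simpa using congrArg Subtype.val hx2
    · right
      exact le_antisymm hNle (Subgroup.subgroupOf_eq_top.mp h)
  -- finiteness of the index type
  have hinj : Function.Injective S := by
    intro i j hSij
    by_contra hij
    apply hSne i
    rw [eq_bot_iff, ← hdisj i]
    refine le_inf le_rfl ?_
    rw [hSij]
    exact le_supP S (fun k => k ≠ i) j (fun h => hij h.symm)
  haveI : Finite (Subgroup G) :=
    Finite.of_injective (fun H : Subgroup G => (H : Set G)) SetLike.coe_injective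
  haveI : Finite ι := Finite.of_injective S hinj
  haveI : Fintype ι := Fintype.ofFinite ι
  -- commuting of sups over disjoint index predicates
  have hsupcomm : ∀ (p q : ι → Prop), (∀ i, ¬(p i ∧ q i)) →
      ∀ x ∈ (⨆ i, ⨆ (_ : p i), S i), ∀ y ∈ (⨆ i, ⨆ (_ : q i), S i), Commute x y := by
    intro p q hpq
    have h1 : ∀ i, p i → ∀ z ∈ S i,
        (⨆ j, ⨆ (_ : q j), S j) ≤ Subgroup.centralizer {z} := by
      intro i hpi z hz
      refine iSup_le fun j => iSup_le fun hqj => fun y hy => ?_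
      rw [Subgroup.mem_centralizer_singleton_iff]
      have hij : j ≠ i := fun e => hpq i ⟨hpi, e ▸ hqj⟩
      exact (hcomm j i hij y hy z hz).eq
    intro x hx y hy
    have h2 : (⨆ i, ⨆ (_ : p i), S i) ≤ Subgroup.centralizer {y} := by
      refine iSup_le fun i => iSup_le fun hpi => fun z hz => ?_
      rw [Subgroup.mem_centralizer_singleton_iff]
      have h3 := h1 i hpi z hz hy
      rw [Subgroup.mem_centralizer_singleton_iff] at h3
      exact h3.symm
    have h4 := h2 hx
    rw [Subgroup.mem_centralizer_singleton_iff] at h4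
    exact h4
  -- every sup of factors lies in A, and A splits across any predicate
  have hBle : ∀ p : ι → Prop, (⨆ i, ⨆ (_ : p i), S i) ≤ A :=
    fun p => iSup_le fun i => iSup_le fun _ => hle i
  have hsplitA : ∀ p : ι → Prop,
      A ≤ (⨆ i, ⨆ (_ : p i), S i) ⊔ (⨆ i, ⨆ (_ : ¬ p i), S i) := by
    intro p
    rw [← hsup]
    refine iSup_le fun i => ?_
    by_cases hpi : p i
    · exact le_sup_of_le_left (le_supP S p i hpi)
    · exact le_sup_of_le_right (le_supP S (fun k => ¬ p k) i hpi)
  -- triviality of the centralizer of A inside A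
  have hcentF : ∀ F : Finset ι, ∀ z ∈ (⨆ i ∈ F, S i),
      (∀ i ∈ F, ∀ y ∈ S i, Commute z y) → z = 1 := by
    intro F
    induction F using Finset.induction_on with
    | empty =>
      intro z hz _
      have : z ∈ (⊥ : Subgroup G) := by simpa using hz
      simpa using this
    | @insert j F hj ih =>
      intro z hz hcz
      rw [Finset.iSup_insert] at hz
      have hcommBC : ∀ b ∈ S j, ∀ c ∈ ⨆ i ∈ F, S i, Commute b c := by
        intro b hb c hc
        have hcen : (⨆ i ∈ F, S i) ≤ Subgroup.centralizer {b} := by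
          refine iSup_le fun i => iSup_le fun hiF => fun y hy => ?_
          rw [Subgroup.mem_centralizer_singleton_iff]
          exact (hcomm i j (fun e => hj (e ▸ hiF)) y hy b hb).eq
        have := hcen hc
        rw [Subgroup.mem_centralizer_singleton_iff] at this
        exact this.symm
      obtain ⟨b, hb, c, hc, rfl⟩ := comm_sup_mem hcommBC _ hz
      have hbS : ∀ y ∈ S j, Commute b y := by
        intro y hy
        have h1 : Commute (b * c) y := hcz j (Finset.mem_insert_self j F) y hy
        have h2 : Commute c y := (hcommBC y hy c hc).symm
        have e : b = (b * c) * c⁻¹ := by group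
        rw [e]
        exact Commute.mul_left h1 h2.inv_left
      have hb1 : b = 1 := simple_central_eq_one (hS j).1 (hS j).2 b hb hbS
      have hc1 : c = 1 := by
        apply ih c hc
        intro i hiF y hy
        have h1 := hcz i (Finset.mem_insert_of_mem hiF) y hy
        rwa [hb1, one_mul] at h1
      rw [hb1, hc1, one_mul]
  have hcentral : ∀ z ∈ A, (∀ a ∈ A, Commute z a) → z = 1 := by
    intro z hz hc
    apply hcentF Finset.univ z
    · have h1 : (⨆ i, S i) ≤ ⨆ i ∈ Finset.univ, S i :=
        iSup_le fun i => le_supP S (fun k => k ∈ Finset.univ) i (Finset.mem_univ i)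
      rw [← hsup] at hz
      exact h1 hz
    · intro i _ y hy
      exact hc y (hle i hy)
  -- independence of complementary sups
  have hindep : ∀ p : ι → Prop,
      (⨆ i, ⨆ (_ : p i), S i) ⊓ (⨆ i, ⨆ (_ : ¬ p i), S i) = ⊥ := by
    intro p
    rw [eq_bot_iff]
    intro x hx
    obtain ⟨hxB, hxC⟩ := hx
    have hBC := hsupcomm p (fun i => ¬ p i) (fun i h => h.2 h.1)
    rw [Subgroup.mem_bot]
    apply hcentral x (hBle p hxB)
    intro a ha
    obtain ⟨b, hb, c, hc, rfl⟩ := comm_sup_mem hBC a (hsplitA p ha)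
    have h1 : Commute x b := (hBC b hb x hxC).symm
    have h2 : Commute x c := hBC x hxB c hc
    exact h1.mul_right h2
  -- commuting of A-invariant subgroups with factors they avoid
  have hNdisj : ∀ (N : Subgroup G), N ≤ A → (∀ a ∈ A, ∀ n ∈ N, a * n * a⁻¹ ∈ N) →
      ∀ j, ¬ S j ≤ N → ∀ m ∈ N, ∀ y ∈ S j, Commute m y := by
    intro N hNA hNinv j hjN m hm y hy
    have hd : m * y * m⁻¹ * y⁻¹ ∈ N ⊓ S j := by
      constructor
      · have h1 : y * m⁻¹ * y⁻¹ ∈ N := hNinv y (hle j hy) m⁻¹ (N.inv_mem hm)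
        have e : m * y * m⁻¹ * y⁻¹ = m * (y * m⁻¹ * y⁻¹) := by group
        rw [e]; exact N.mul_mem hm h1
      · have h1 : m * y * m⁻¹ ∈ S j := hAinvS j m (hNA hm) y hy
        exact (S j).mul_mem h1 ((S j).inv_mem hy)
    have hbot : N ⊓ S j = ⊥ := by
      rcases hmin j (N ⊓ S j)
          (fun a ha n hn => ⟨hNinv a ha n hn.1, hAinvS j a ha n hn.2⟩) inf_le_right with h | h
      · exact h
      · exfalso
        apply hjN
        rw [← h]
        exact inf_le_left
    rw [hbot, Subgroup.mem_bot] at hd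
    show m * y = y * m
    have e : m * y = (m * y * m⁻¹ * y⁻¹) * (y * m) := by group
    rw [e, hd, one_mul]
  -- structure of A-invariant subgroups of A
  have hstruct : ∀ (N : Subgroup G), N ≤ A → (∀ a ∈ A, ∀ n ∈ N, a * n * a⁻¹ ∈ N) →
      N = ⨆ i, ⨆ (_ : S i ≤ N), S i := by
    intro N hNA hNinv
    refine le_antisymm ?_ (iSup_le fun i => iSup_le fun h => h)
    intro n hn
    have hBC := hsupcomm (fun i => S i ≤ N) (fun i => ¬ S i ≤ N) (fun i h => h.2 h.1)
    obtain ⟨b, hb, c, hc, rfl⟩ := comm_sup_mem hBC n (hsplitA _ (hNA hn))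
    have hbN : b ∈ N := by
      have hBN : (⨆ i, ⨆ (_ : S i ≤ N), S i) ≤ N := iSup_le fun i => iSup_le fun h => h
      exact hBN hb
    have hcN : c ∈ N := by
      have e : c = b⁻¹ * (b * c) := by group
      rw [e]; exact N.mul_mem (N.inv_mem hbN) hn
    have hc1 : c = 1 := by
      apply hcentral c (hBle _ hc)
      intro a ha
      obtain ⟨b', hb', c', hc', rfl⟩ := comm_sup_mem hBC a (hsplitA _ ha)
      have h1 : Commute c b' := (hBC b' hb' c hc).symm
      have h2 : Commute c c' := by
        have hcen : (⨆ i, ⨆ (_ : ¬ S i ≤ N), S i) ≤ Subgroup.centralizer {c} := by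
          refine iSup_le fun i => iSup_le fun hpi => fun y hy => ?_
          rw [Subgroup.mem_centralizer_singleton_iff]
          exact (hNdisj N hNA hNinv i hpi c hcN y hy).eq.symm
        have := hcen hc'
        rw [Subgroup.mem_centralizer_singleton_iff] at this
        exact this.symm
      exact h1.mul_right h2
    rw [hc1, mul_one]
    exact hb
  -- conjugation preserves A-invariance, containment in A, nontriviality
  have hconjinv : ∀ (g : G) (N : Subgroup G), (∀ a ∈ A, ∀ n ∈ N, a * n * a⁻¹ ∈ N) →
      (∀ a ∈ A, ∀ n ∈ conj' g N, a * n * a⁻¹ ∈ conj' g N) := by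
    intro g N hNinv a ha n hn
    rw [mem_conj'] at hn ⊢
    have e : g⁻¹ * (a * n * a⁻¹) * g = (g⁻¹ * a * g) * (g⁻¹ * n * g) * (g⁻¹ * a * g)⁻¹ := by
      group
    rw [e]
    have haA : g⁻¹ * a * g ∈ A := by
      have := hA.conj_mem a ha g⁻¹
      simpa using this
    exact hNinv _ haA _ hn
  have hconjle : ∀ (g : G) (N : Subgroup G), N ≤ A → conj' g N ≤ A := by
    intro g N h x hx
    rw [mem_conj'] at hx
    have h2 := hA.conj_mem _ (h hx) g
    have e : g * (g⁻¹ * x * g) * g⁻¹ = x := by group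
    rwa [e] at h2
  have hconjne : ∀ (g : G) (N : Subgroup G), N ≠ ⊥ → conj' g N ≠ ⊥ := by
    intro g N hN h
    apply hN
    have h2 := congrArg (conj' g⁻¹) h
    rwa [conj'_inv_conj', conj'_bot] at h2
  -- every nontrivial A-invariant subgroup of A contains a factor
  have hSleS : ∀ (N : Subgroup G), N ≤ A → (∀ a ∈ A, ∀ n ∈ N, a * n * a⁻¹ ∈ N) →
      N ≠ ⊥ → ∃ j, S j ≤ N := by
    intro N hNA hNinv hNne
    by_contra hno
    push_neg at hno
    apply hNne
    have h2 := hstruct N hNA hNinv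
    have h3 : (⨆ i, ⨆ (_ : S i ≤ N), S i) ≤ ⊥ :=
      iSup_le fun i => iSup_le fun hSi => absurd hSi (hno i)
    rw [eq_bot_iff]
    exact h2.trans_le h3
  -- conjugation permutes the simple factors
  have hperm : ∀ (g : G) (i : ι), ∃ j, conj' g (S i) = S j := by
    intro g i
    obtain ⟨j, hj⟩ := hSleS (conj' g (S i)) (hconjle _ _ (hle i))
      (hconjinv g (S i) (hAinvS i)) (hconjne g (S i) (hSne i))
    refine ⟨j, ?_⟩
    have hM : conj' g⁻¹ (S j) ≤ S i := by
      have h2 := conj'_mono g⁻¹ hj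
      rwa [conj'_inv_conj'] at h2
    rcases hmin i _ (hconjinv g⁻¹ (S j) (hAinvS j)) hM with h | h
    · exact absurd h (hconjne g⁻¹ (S j) (hSne j))
    · have h2 := congrArg (conj' g) h
      rw [conj'_conj'_inv] at h2
      exact h2.symm
  -- basic facts about orbit products
  have hSop : ∀ i, S i ≤ oprod S i := fun i => le_supP S (orel S i) i (orel_refl S i)
  have hople : ∀ i, oprod S i ≤ A := fun i => hBle (orel S i)
  have hopne : ∀ i, oprod S i ≠ ⊥ := by
    intro i h
    apply hSne i
    rw [eq_bot_iff, ← h]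
    exact hSop i
  have hopnormal : ∀ i, (oprod S i).Normal := by
    intro i
    apply normal_of_conj'_le
    intro g
    rw [conj'_le_iff]
    refine iSup_le fun j => iSup_le fun hrij => ?_
    rw [← conj'_le_iff (g := g)]
    obtain ⟨j', hj'⟩ := hperm g j
    rw [hj']
    exact le_supP S (orel S i) j' (orel_trans hrij ⟨g, hj'⟩)
  have hSleop_rel : ∀ i j, S j ≤ oprod S i → orel S i j := by
    intro i j hj
    by_contra hnr
    apply hSne j
    have h2 : S j ≤ (⨆ k, ⨆ (_ : orel S i k), S k) ⊓ (⨆ k, ⨆ (_ : ¬ orel S i k), S k) :=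
      le_inf hj (le_supP S (fun k => ¬ orel S i k) j hnr)
    rw [hindep (orel S i)] at h2
    exact le_bot_iff.mp h2
  -- orbit products are minimal normal subgroups
  have hopmin : ∀ i (N : Subgroup G), N.Normal → N ≤ oprod S i → N ≠ ⊥ → N = oprod S i := by
    intro i N hNn hNle hNne
    have hNA : N ≤ A := hNle.trans (hople i)
    have hNinv : ∀ a ∈ A, ∀ n ∈ N, a * n * a⁻¹ ∈ N := fun a _ n hn => hNn.conj_mem n hn a
    obtain ⟨j₀, hj₀⟩ := hSleS N hNA hNinv hNne
    have hrij₀ : orel S i j₀ := hSleop_rel i j₀ (hj₀.trans hNle)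
    refine le_antisymm hNle ?_
    refine iSup_le fun j => iSup_le fun hrij => ?_
    obtain ⟨g, hg⟩ := orel_trans (orel_symm hrij₀) hrij
    rw [← hg]
    exact (conj'_mono g hj₀).trans (le_of_eq (conj'_eq_of_normal hNn g))
  -- equality and distinctness of orbit products
  have hopeq : ∀ i j, orel S i j → oprod S i = oprod S j := by
    intro i j hij
    apply le_antisymm
    · exact iSup_le fun k => iSup_le fun h =>
        le_supP S (orel S j) k (orel_trans (orel_symm hij) h)
    · exact iSup_le fun k => iSup_le fun h =>
        le_supP S (orel S i) k (orel_trans hij h)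
  -- the finite family of orbit products
  set t : Finset (Subgroup G) := Finset.image (fun i => oprod S i) Finset.univ with ht
  set C : Fin t.card → Subgroup G := fun m => ((t.equivFin.symm m : ↥t) : Subgroup G) with hC
  have hrep : ∀ m, ∃ i, C m = oprod S i := by
    intro m
    have h2 : ((t.equivFin.symm m : ↥t) : Subgroup G) ∈
        Finset.image (fun i => oprod S i) Finset.univ := by
      rw [← ht]; exact (t.equivFin.symm m).2
    obtain ⟨i, _, hi⟩ := Finset.mem_image.mp h2
    exact ⟨i, hi.symm⟩
  have hsurjC : ∀ i, ∃ m, C m = oprod S i := by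
    intro i
    have hmem : oprod S i ∈ t := by
      rw [ht]
      exact Finset.mem_image_of_mem _ (Finset.mem_univ i)
    refine ⟨t.equivFin ⟨oprod S i, hmem⟩, ?_⟩
    show ((t.equivFin.symm (t.equivFin ⟨oprod S i, hmem⟩) : ↥t) : Subgroup G) = oprod S i
    rw [Equiv.symm_apply_apply]
  have hCinj : Function.Injective C := by
    intro m m' h
    apply t.equivFin.symm.injective
    exact Subtype.ext h
  refine ⟨t.card, C, ?_, ?_, ?_, ?_, ?_⟩
  · -- minimal normal
    intro m
    obtain ⟨i, hi⟩ := hrep m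
    rw [hi]
    exact ⟨hopnormal i, hopne i, fun B hBn hBle hBne => hopmin i B hBn hBle hBne⟩
  · -- C m ≤ A
    intro m
    obtain ⟨i, hi⟩ := hrep m
    rw [hi]
    exact hople i
  · -- subgroupOf normal
    intro m
    obtain ⟨i, hi⟩ := hrep m
    rw [hi]
    exact subgroupOf_normal_of_normal (hopnormal i)
  · -- sup
    apply le_antisymm
    · refine iSup_le fun m => ?_
      obtain ⟨i, hi⟩ := hrep m
      rw [hi]
      exact hople i
    · rw [← hsup]
      refine iSup_le fun i => ?_
      obtain ⟨m, hm⟩ := hsurjC i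
      exact (hSop i).trans (hm ▸ le_iSup C m)
  · -- independence
    intro m
    obtain ⟨i, hi⟩ := hrep m
    have hrest : (⨆ m', ⨆ (_ : m' ≠ m), C m') ≤ ⨆ k, ⨆ (_ : ¬ orel S i k), S k := by
      refine iSup_le fun m' => iSup_le fun hne => ?_
      obtain ⟨i', hi'⟩ := hrep m'
      rw [hi']
      refine iSup_le fun j => iSup_le fun hri'j => ?_
      refine le_supP S (fun k => ¬ orel S i k) j (?_ : ¬ orel S i j)
      intro hrij
      apply hne
      apply hCinj
      rw [hi, hi']
      exact hopeq i' i (orel_trans hri'j (orel_symm hrij))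
    rw [eq_bot_iff, ← hindep (orel S i)]
    refine le_inf ?_ ?_
    · refine inf_le_left.trans ?_
      rw [hi]
      exact le_rfl
    · exact inf_le_right.trans hrest
end

section
/- Let G be a finite group, let A be a normal subgroup of G which is an internal direct product of non-abelian simple subgroups, and let B be a subnormal subgroup of G with B ≤ A such that B is a non-abelian simple group. Then the normal closure B^G of B in G is a minimal normal subgroup of G contained in A, and A is the internal direct product of B^G and C_A(B^G). -/
open scoped commutatorElement

section AuxStmt6

open Subgroup

variable {G : Type} [Group G]

lemma aux_mem_sup_decomp {H K : Subgroup G} (hK : K ≤ Subgroup.normalizer (H : Set G)) {x : G}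
    (hx : x ∈ H ⊔ K) : ∃ h ∈ H, ∃ k ∈ K, x = h * k := by
  let P : Subgroup G :=
  { carrier := {x | ∃ h ∈ H, ∃ k ∈ K, x = h * k}
    one_mem' := ⟨1, H.one_mem, 1, K.one_mem, by simp⟩
    mul_mem' := by
      rintro a b ⟨h1, hh1, k1, hk1, rfl⟩ ⟨h2, hh2, k2, hk2, rfl⟩
      refine ⟨h1 * (k1 * h2 * k1⁻¹), H.mul_mem hh1 ?_, k1 * k2, K.mul_mem hk1 hk2, by group⟩
      exact ((Subgroup.mem_normalizer_iff.mp (hK hk1)) h2).mp hh2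
    inv_mem' := by
      rintro a ⟨h, hh, k, hk, rfl⟩
      refine ⟨k⁻¹ * h⁻¹ * (k⁻¹)⁻¹, ?_, k⁻¹, K.inv_mem hk, by group⟩
      exact ((Subgroup.mem_normalizer_iff.mp (hK (K.inv_mem hk))) h⁻¹).mp (H.inv_mem hh) }
  have hHP : H ≤ P := fun h hh => ⟨h, hh, 1, K.one_mem, by simp⟩
  have hKP : K ≤ P := fun k hk => ⟨1, H.one_mem, k, hk, by simp⟩
  exact (sup_le hHP hKP) hx

lemma aux_nonab_ne_bot {S : Subgroup G} (h : IsNonabelianSimple ↥S) : S ≠ ⊥ := by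
  obtain ⟨-, x, y, hxy⟩ := h
  intro hbot
  apply hxy
  have hx : (x : G) = 1 := by
    have h2 : (x : G) ∈ (⊥ : Subgroup G) := by rw [← hbot]; exact x.2
    simpa using h2
  have hy : (y : G) = 1 := by
    have h2 : (y : G) ∈ (⊥ : Subgroup G) := by rw [← hbot]; exact y.2
    simpa using h2
  ext
  simp [hx, hy]

lemma aux_nonab_center {S : Subgroup G} (h : IsNonabelianSimple ↥S) :
    ∀ s ∈ S, (∀ x ∈ S, x * s = s * x) → s = 1 := by
  obtain ⟨hs, x, y, hxy⟩ := h
  intro s hsS hcen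
  have hz : (⟨s, hsS⟩ : ↥S) ∈ Subgroup.center ↥S := by
    rw [Subgroup.mem_center_iff]
    intro g
    ext
    simpa using hcen g g.2
  rcases hs.eq_bot_or_eq_top_of_normal (Subgroup.center ↥S) inferInstance with hb | ht
  · rw [hb] at hz
    have : (⟨s, hsS⟩ : ↥S) = 1 := by simpa using hz
    simpa using congrArg Subtype.val this
  · exfalso
    apply hxy
    have hxc : x ∈ Subgroup.center ↥S := by rw [ht]; trivial
    exact (Subgroup.mem_center_iff.mp hxc y).symm

lemma aux_simple_sub {S N : Subgroup G} (hs : IsSimpleGroup ↥S) (hle : N ≤ S)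
    (hconj : ∀ s ∈ S, ∀ x ∈ N, s * x * s⁻¹ ∈ N) : N = ⊥ ∨ N = S := by
  have hnorm : (N.subgroupOf S).Normal :=
    (normal_subgroupOf_iff hle).mpr (fun h k hh hk => hconj k hk h hh)
  rcases hs.eq_bot_or_eq_top_of_normal _ hnorm with hb | ht
  · left
    have hd := Subgroup.subgroupOf_eq_bot.mp hb
    exact le_bot_iff.mp ((le_inf le_rfl hle).trans hd.le_bot)
  · right
    exact le_antisymm hle (Subgroup.subgroupOf_eq_top.mp ht)

variable {ι : Type} (S : ι → Subgroup G)

lemma aux_single_le_normalizer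
    (hcomm : ∀ i j, i ≠ j → ∀ x ∈ S i, ∀ y ∈ S j, x * y = y * x)
    (i j : ι) : S j ≤ Subgroup.normalizer (S i : Set G) := by
  by_cases h : j = i
  · subst h; exact Subgroup.le_normalizer
  · intro y hy
    rw [Subgroup.mem_normalizer_iff]
    intro x
    constructor
    · intro hx
      have h1 := hcomm i j (Ne.symm h) x hx y hy
      have h2 : y * x * y⁻¹ = x := by rw [← h1]; group
      rw [h2]; exact hx
    · intro hx
      have h2 := hcomm i j (Ne.symm h) _ hx y hy
      have h3 : x = y⁻¹ * ((y * x * y⁻¹) * y) := by group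
      rw [h2] at h3
      have h4 : y⁻¹ * (y * (y * x * y⁻¹)) = y * x * y⁻¹ := by group
      rw [h4] at h3
      rw [h3]; exact hx

lemma aux_single_le_centralizer
    (hcomm : ∀ i j, i ≠ j → ∀ x ∈ S i, ∀ y ∈ S j, x * y = y * x)
    {i j : ι} (hne : j ≠ i) : S j ≤ Subgroup.centralizer (S i : Set G) := by
  intro y hy
  rw [Subgroup.mem_centralizer_iff]
  intro x hx
  exact hcomm i j (Ne.symm hne) x hx y hy

set_option maxHeartbeats 1000000 in
lemma aux_ldecomp
    (hcomm : ∀ i j, i ≠ j → ∀ x ∈ S i, ∀ y ∈ S j, x * y = y * x)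
    (hZ : ∀ i, ∀ s ∈ S i, (∀ x ∈ S i, x * s = s * x) → s = 1)
    (F : Finset ι) (T : Set ι) :
    ∀ n, n ∈ (⨆ i ∈ F, S i) → (∀ i ∈ F, i ∉ T → ∀ x ∈ S i, x * n = n * x) →
      n ∈ ⨆ i ∈ F, ⨆ (_ : i ∈ T), S i := by
  classical
  induction F using Finset.induction_on with
  | empty =>
    intro n hn _
    have h1 : n = 1 := by simpa using hn
    rw [h1]; exact Subgroup.one_mem _
  | @insert a F' ha IH =>
    intro n hn hcen
    rw [Finset.iSup_insert] at hn
    have hKnorm : (⨆ i ∈ F', S i) ≤ Subgroup.normalizer (S a : Set G) :=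
      iSup₂_le fun j _ => aux_single_le_normalizer S hcomm a j
    obtain ⟨s, hs, m, hm, rfl⟩ := aux_mem_sup_decomp hKnorm hn
    have hmcen : ∀ x ∈ S a, x * m = m * x := by
      intro x hx
      have hmc : m ∈ Subgroup.centralizer (S a : Set G) :=
        (iSup₂_le fun j hj =>
          aux_single_le_centralizer S hcomm (fun h : j = a => ha (h ▸ hj))) hm
      exact Subgroup.mem_centralizer_iff.mp hmc x hx
    have hmono : (⨆ i ∈ F', ⨆ (_ : i ∈ T), S i) ≤
        ⨆ i ∈ insert a F', ⨆ (_ : i ∈ T), S i :=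
      biSup_mono (fun i hi => Finset.mem_insert_of_mem hi)
    by_cases haT : a ∈ T
    · have hmhyp : ∀ i ∈ F', i ∉ T → ∀ x ∈ S i, x * m = m * x := by
        intro i hi hiT x hx
        have hne : a ≠ i := fun h => hiT (h ▸ haT)
        have h1 := hcen i (Finset.mem_insert_of_mem hi) hiT x hx
        have h2 := hcomm a i hne s hs x hx
        have h3 : s * (x * m) = s * (m * x) := by
          have : x * (s * m) = (s * m) * x := h1
          calc s * (x * m) = (s * x) * m := by group
            _ = (x * s) * m := by rw [h2]
            _ = x * (s * m) := by group
            _ = (s * m) * x := h1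
            _ = s * (m * x) := by group
        exact mul_left_cancel h3
      have hmmem := IH m hm hmhyp
      have hsmem : S a ≤ ⨆ i ∈ insert a F', ⨆ (_ : i ∈ T), S i := by
        have h9 : (⨆ (_ : a ∈ T), S a) ≤ ⨆ i ∈ insert a F', ⨆ (_ : i ∈ T), S i :=
          le_iSup₂ (f := fun i (_ : i ∈ insert a F') => ⨆ (_ : i ∈ T), S i) a
            (Finset.mem_insert_self a F')
        exact (le_iSup (fun _ : a ∈ T => S a) haT).trans h9
      exact Subgroup.mul_mem _ (hsmem hs) (hmono hmmem)
    · have hscen : ∀ x ∈ S a, x * s = s * x := by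
        intro x hx
        have h1 := hcen a (Finset.mem_insert_self a F') haT x hx
        have h2 := hmcen x hx
        have h3 : (x * s) * m = (s * x) * m := by
          calc (x * s) * m = x * (s * m) := by group
            _ = (s * m) * x := h1
            _ = s * (m * x) := by group
            _ = s * (x * m) := by rw [← h2]
            _ = (s * x) * m := by group
        exact mul_right_cancel h3
      have hs1 : s = 1 := hZ a s hs hscen
      have hmhyp : ∀ i ∈ F', i ∉ T → ∀ x ∈ S i, x * m = m * x := by
        intro i hi hiT x hx
        have h1 := hcen i (Finset.mem_insert_of_mem hi) hiT x hx
        rwa [hs1, one_mul] at h1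
      have hmmem := IH m hm hmhyp
      rw [hs1, one_mul]
      exact hmono hmmem

lemma aux_lnormal
    (hcomm : ∀ i j, i ≠ j → ∀ x ∈ S i, ∀ y ∈ S j, x * y = y * x)
    (hZ : ∀ i, ∀ s ∈ S i, (∀ x ∈ S i, x * s = s * x) → s = 1)
    (hnbs : ∀ i, IsNonabelianSimple ↥(S i)) [Fintype ι]
    (U : Set ι) (N : Subgroup G) (hle : N ≤ ⨆ i ∈ U, S i)
    (hconj : ∀ a ∈ (⨆ i ∈ U, S i : Subgroup G), ∀ x ∈ N, a * x * a⁻¹ ∈ N) :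
    N = ⨆ i ∈ {i | i ∈ U ∧ S i ≤ N}, S i := by
  classical
  refine le_antisymm ?_ (iSup₂_le fun i hi => hi.2)
  intro n hn
  have hcen : ∀ i ∈ U, ¬ S i ≤ N → ∀ x ∈ S i, x * n = n * x := by
    intro i hiU hiN x hx
    have hSiU : S i ≤ ⨆ i ∈ U, S i := le_iSup₂ (f := fun i (_ : i ∈ U) => S i) i hiU
    have hbot : S i ⊓ N = ⊥ := by
      have hcj : ∀ s ∈ S i, ∀ z ∈ S i ⊓ N, s * z * s⁻¹ ∈ S i ⊓ N := by
        rintro s hss z hz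
        have hz' := Subgroup.mem_inf.mp hz
        exact Subgroup.mem_inf.mpr
          ⟨Subgroup.mul_mem _ (Subgroup.mul_mem _ hss hz'.1) (Subgroup.inv_mem _ hss),
           hconj s (hSiU hss) z hz'.2⟩
      rcases aux_simple_sub (hnbs i).1 (inf_le_left : S i ⊓ N ≤ S i) hcj with h | h
      · exact h
      · exact absurd (h ▸ inf_le_right) hiN
    have hc1 : x * n * x⁻¹ ∈ N := hconj x (hSiU hx) n hn
    have hc2 : x * n * x⁻¹ * n⁻¹ ∈ N := Subgroup.mul_mem _ hc1 (Subgroup.inv_mem _ hn)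
    have hnnorm : n ∈ Subgroup.normalizer (S i : Set G) :=
      (iSup₂_le fun j _ => aux_single_le_normalizer S hcomm i j) (hle hn)
    have hc3 : n * x⁻¹ * n⁻¹ ∈ S i :=
      (Subgroup.mem_normalizer_iff.mp hnnorm x⁻¹).mp (Subgroup.inv_mem _ hx)
    have hc4 : x * n * x⁻¹ * n⁻¹ ∈ S i := by
      have h5 := Subgroup.mul_mem _ hx hc3
      have heq : x * n * x⁻¹ * n⁻¹ = x * (n * x⁻¹ * n⁻¹) := by group
      rw [heq]; exact h5
    have h6 : x * n * x⁻¹ * n⁻¹ ∈ S i ⊓ N := Subgroup.mem_inf.mpr ⟨hc4, hc2⟩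
    rw [hbot] at h6
    have h7 : x * n * x⁻¹ * n⁻¹ = 1 := by simpa using h6
    have h8 : Commute x n := commutatorElement_eq_one_iff_commute.mp h7
    exact h8.eq
  have hFU : ∀ i, i ∈ Finset.univ.filter (· ∈ U) ↔ i ∈ U := by
    intro i; simp
  have hn' : n ∈ ⨆ i ∈ Finset.univ.filter (· ∈ U), S i := by
    have hEq : (⨆ i ∈ U, S i) ≤ ⨆ i ∈ Finset.univ.filter (· ∈ U), S i :=
      iSup₂_le fun i hi =>
        le_iSup₂ (f := fun i (_ : i ∈ Finset.univ.filter (· ∈ U)) => S i) i ((hFU i).mpr hi)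
    exact hEq (hle hn)
  have hres := aux_ldecomp S hcomm hZ (Finset.univ.filter (· ∈ U)) {i | S i ≤ N} n hn'
    (fun i hi hiT x hx => hcen i ((hFU i).mp hi) hiT x hx)
  have hfin : (⨆ i ∈ Finset.univ.filter (· ∈ U), ⨆ (_ : i ∈ {i | S i ≤ N}), S i) ≤
      ⨆ i ∈ {i | i ∈ U ∧ S i ≤ N}, S i :=
    iSup_le fun i => iSup_le fun hiF => iSup_le fun hiT =>
      le_iSup₂ (f := fun i (_ : i ∈ {i | i ∈ U ∧ S i ≤ N}) => S i) i ⟨(hFU i).mp hiF, hiT⟩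
  exact hfin hres

lemma aux_key_eq_some [Fintype ι]
    (hcomm : ∀ i j, i ≠ j → ∀ x ∈ S i, ∀ y ∈ S j, x * y = y * x)
    (hZ : ∀ i, ∀ s ∈ S i, (∀ x ∈ S i, x * s = s * x) → s = 1)
    (hnbs : ∀ i, IsNonabelianSimple ↥(S i))
    (B : Subgroup G) (hle : B ≤ ⨆ i, S i) (hsn : IsSubnormal G B)
    (hB : IsNonabelianSimple ↥B) : ∃ i, B = S i := by
  obtain ⟨n, c, hc0, hcn, hstep⟩ := hsn
  set AA := (⨆ i, S i : Subgroup G) with hAA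
  have hP : ∀ j, j ≤ n → ∃ U : Set ι,
      c (n - j) ⊓ AA = ⨆ i ∈ U, S i ∧ ∀ i ∈ U, S i ≤ c (n - j) ⊓ AA := by
    intro j
    induction j with
    | zero =>
      intro _
      refine ⟨Set.univ, ?_, ?_⟩
      · rw [Nat.sub_zero, hcn, top_inf_eq, hAA, ← iSup_univ]
      · intro i _
        rw [Nat.sub_zero, hcn, top_inf_eq]
        exact le_iSup S i
    | succ j IH =>
      intro hj
      obtain ⟨U', hU', hU'le⟩ := IH (Nat.le_of_succ_le hj)
      have hm1 : n - (j + 1) + 1 = n - j := by omega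
      have hlt : n - (j + 1) < n := by omega
      obtain ⟨hcle, hcnorm⟩ := hstep (n - (j + 1)) hlt
      rw [hm1] at hcle hcnorm
      have h1 : c (n - (j + 1)) ⊓ AA ≤ ⨆ i ∈ U', S i := by
        rw [← hU']; exact inf_le_inf_right _ hcle
      have h2 : ∀ a ∈ (⨆ i ∈ U', S i : Subgroup G),
          ∀ x ∈ c (n - (j + 1)) ⊓ AA, a * x * a⁻¹ ∈ c (n - (j + 1)) ⊓ AA := by
        intro a ha x hx
        rw [← hU'] at ha
        have ha' := Subgroup.mem_inf.mp ha
        have hx' := Subgroup.mem_inf.mp hx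
        exact Subgroup.mem_inf.mpr
          ⟨(Subgroup.normal_subgroupOf_iff hcle).mp hcnorm x a hx'.1 ha'.1,
           Subgroup.mul_mem _ (Subgroup.mul_mem _ ha'.2 hx'.2) (Subgroup.inv_mem _ ha'.2)⟩
      have h3 := aux_lnormal S hcomm hZ hnbs U' (c (n - (j + 1)) ⊓ AA) h1 h2
      exact ⟨{i | i ∈ U' ∧ S i ≤ c (n - (j + 1)) ⊓ AA}, h3, fun i hi => hi.2⟩
  obtain ⟨U, hU, hUle⟩ := hP n le_rfl
  rw [Nat.sub_self, hc0] at hU hUle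
  have hBA : B ⊓ AA = B := inf_eq_left.mpr hle
  rw [hBA] at hU hUle
  have hUne : ∃ i, i ∈ U := by
    by_contra h
    push_neg at h
    have hBbot : B = ⊥ := by
      rw [hU]
      exact le_antisymm (iSup₂_le fun i hi => absurd hi (h i)) bot_le
    exact aux_nonab_ne_bot hB hBbot
  obtain ⟨i0, hi0⟩ := hUne
  have hS0le : S i0 ≤ B := hUle i0 hi0
  have hS0conj : ∀ b ∈ B, ∀ x ∈ S i0, b * x * b⁻¹ ∈ S i0 := by
    intro b hb x hx
    have hbn : b ∈ Subgroup.normalizer (S i0 : Set G) :=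
      (iSup_le fun j => aux_single_le_normalizer S hcomm i0 j) (hle hb)
    exact (Subgroup.mem_normalizer_iff.mp hbn x).mp hx
  rcases aux_simple_sub hB.1 hS0le hS0conj with h | h
  · exact absurd h (aux_nonab_ne_bot (hnbs i0))
  · exact ⟨i0, h.symm⟩

lemma aux_nonab_equiv {H K : Type} [Group H] [Group K] (e : H ≃* K)
    (h : IsNonabelianSimple H) : IsNonabelianSimple K := by
  obtain ⟨hs, x, y, hxy⟩ := h
  constructor
  · haveI := hs
    haveI : Nontrivial K := e.symm.toEquiv.nontrivial
    exact IsSimpleGroup.isSimpleGroup_of_surjective e.toMonoidHom e.surjective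
  · refine ⟨e x, e y, fun hc => hxy (e.injective ?_)⟩
    rw [map_mul, map_mul]
    exact hc

lemma aux_subnormal_conj {B : Subgroup G} (g : G) (h : IsSubnormal G B) :
    IsSubnormal G (Subgroup.map (MulAut.conj g).toMonoidHom B) := by
  obtain ⟨n, c, hc0, hcn, hstep⟩ := h
  refine ⟨n, fun i => Subgroup.map (MulAut.conj g).toMonoidHom (c i), ?_, ?_, ?_⟩
  · show Subgroup.map (MulAut.conj g).toMonoidHom (c 0) = _
    rw [hc0]
  · show Subgroup.map (MulAut.conj g).toMonoidHom (c n) = ⊤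
    rw [hcn]
    exact Subgroup.map_top_of_surjective _ (MulAut.conj g).surjective
  · intro i hi
    obtain ⟨hle, hnorm⟩ := hstep i hi
    refine ⟨Subgroup.map_mono hle, ?_⟩
    rw [Subgroup.normal_subgroupOf_iff (Subgroup.map_mono hle)]
    rintro h' k' hh' hk'
    obtain ⟨x, hx, rfl⟩ := Subgroup.mem_map.mp hh'
    obtain ⟨y, hy, rfl⟩ := Subgroup.mem_map.mp hk'
    refine Subgroup.mem_map.mpr ⟨y * x * y⁻¹,
      (Subgroup.normal_subgroupOf_iff hle).mp hnorm x y hx hy, ?_⟩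
    rw [map_mul, map_mul, map_inv]

lemma aux_conj_conj (B : Subgroup G) (g h : G) :
    Subgroup.map (MulAut.conj g).toMonoidHom (Subgroup.map (MulAut.conj h).toMonoidHom B) =
      Subgroup.map (MulAut.conj (g * h)).toMonoidHom B := by
  rw [Subgroup.map_map]
  congr 1
  ext x
  simp [mul_assoc]

lemma aux_conj_one (B : Subgroup G) :
    Subgroup.map (MulAut.conj (1 : G)).toMonoidHom B = B := by
  ext x
  simp

end AuxStmt6

/-- Let `A` be a normal subgroup of a finite group `G` which is an
internal direct product of non-abelian simple subgroups, and let `B ≤ A` be a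
subnormal subgroup of `G` which is non-abelian simple. Then `B^G` is a minimal
normal subgroup of `G` contained in `A`, and `A` is the internal direct product of
`B^G` and `C_A(B^G)`. -/
theorem stmt6 (G : Type) [Group G] [Finite G] (A : Subgroup G) (hA : A.Normal)
    (ι : Type) (S : ι → Subgroup G) (hS : ∀ i, IsNonabelianSimple ↥(S i))
    (hdp : IsInternalDirectProduct A S)
    (B : Subgroup G) (hBA : B ≤ A) (hBsn : IsSubnormal G B)
    (hBsimple : IsNonabelianSimple ↥B) :
    IsMinimalNormal (Subgroup.normalClosure (B : Set G)) ∧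
    Subgroup.normalClosure (B : Set G) ≤ A ∧
    IsInternalDirectProduct A
      ![Subgroup.normalClosure (B : Set G),
        A ⊓ Subgroup.centralizer (Subgroup.normalClosure (B : Set G) : Set G)] := by
  classical
  obtain ⟨hSle, hSnorm, hsup, hind⟩ := hdp
  have hSnorm' : ∀ i, ∀ x ∈ S i, ∀ a ∈ A, a * x * a⁻¹ ∈ S i :=
    fun i x hx a ha => (Subgroup.normal_subgroupOf_iff (hSle i)).mp (hSnorm i) x a hx ha
  have hcomm : ∀ i j, i ≠ j → ∀ x ∈ S i, ∀ y ∈ S j, x * y = y * x := by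
    intro i j hij x hx y hy
    have h1 : x * y * x⁻¹ ∈ S j := hSnorm' j y hy x (hSle i hx)
    have h2 : y * x⁻¹ * y⁻¹ ∈ S i := hSnorm' i x⁻¹ (Subgroup.inv_mem _ hx) y (hSle j hy)
    have hcj : ⁅x, y⁆ ∈ S i ⊓ ⨆ (k) (_ : k ≠ i), S k := by
      refine Subgroup.mem_inf.mpr ⟨?_, ?_⟩
      · rw [commutatorElement_def]
        have heq : x * y * x⁻¹ * y⁻¹ = x * (y * x⁻¹ * y⁻¹) := by group
        rw [heq]
        exact Subgroup.mul_mem _ hx h2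
      · have h3 : x * y * x⁻¹ * y⁻¹ ∈ S j := Subgroup.mul_mem _ h1 (Subgroup.inv_mem _ hy)
        have h4 : S j ≤ ⨆ (k) (_ : k ≠ i), S k :=
          le_iSup₂ (f := fun k (_ : k ≠ i) => S k) j (Ne.symm hij)
        rw [commutatorElement_def]
        exact h4 h3
    rw [hind i] at hcj
    have h5 : ⁅x, y⁆ = 1 := by simpa using hcj
    exact (commutatorElement_eq_one_iff_commute.mp h5).eq
  have hZ : ∀ i, ∀ s ∈ S i, (∀ x ∈ S i, x * s = s * x) → s = 1 :=
    fun i => aux_nonab_center (hS i)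
  have hSinj : Function.Injective S := by
    intro i j hij_eq
    by_contra hne
    have h1 : S i ≤ ⨆ (k) (_ : k ≠ i), S k := by
      have h0 := le_iSup₂ (f := fun k (_ : k ≠ i) => S k) j (fun h : j = i => hne h.symm)
      rw [hij_eq]
      exact h0
    have h2 : S i = ⊥ := (inf_eq_left.mpr h1).symm.trans (hind i)
    exact aux_nonab_ne_bot (hS i) h2
  haveI : Finite (Subgroup G) :=
    Finite.of_injective (fun H : Subgroup G => (H : Set G)) SetLike.coe_injective
  haveI : Finite ι := Finite.of_injective S hSinj
  haveI := Fintype.ofFinite ι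
  have hconjmap : ∀ g : G, ∃ i, Subgroup.map (MulAut.conj g).toMonoidHom B = S i := by
    intro g
    refine aux_key_eq_some S hcomm hZ hS _ ?_ ?_ ?_
    · rw [hsup]
      intro x hx
      obtain ⟨b, hb, rfl⟩ := Subgroup.mem_map.mp hx
      simpa using hA.conj_mem b (hBA hb) g
    · exact aux_subnormal_conj g hBsn
    · exact aux_nonab_equiv
        (Subgroup.equivMapOfInjective B _ (MulAut.conj g).injective) hBsimple
  set R := Subgroup.normalClosure (B : Set G) with hRdef
  set Tstar : Set ι := {i | ∃ g : G, Subgroup.map (MulAut.conj g).toMonoidHom B = S i}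
    with hTdef
  have hRT : R = ⨆ i ∈ Tstar, S i := by
    apply le_antisymm
    · have hNnorm : (⨆ i ∈ Tstar, S i).Normal := by
        constructor
        intro x hx g
        have hmap : Subgroup.map (MulAut.conj g).toMonoidHom (⨆ i ∈ Tstar, S i) ≤
            ⨆ i ∈ Tstar, S i := by
          rw [Subgroup.map_iSup]
          refine iSup_le fun i => ?_
          rw [Subgroup.map_iSup]
          refine iSup_le fun hi => ?_
          obtain ⟨g', hg'⟩ := hi
          rw [← hg', aux_conj_conj]
          obtain ⟨j, hj⟩ := hconjmap (g * g')
          rw [hj]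
          exact le_iSup₂ (f := fun i (_ : i ∈ Tstar) => S i) j ⟨g * g', hj⟩
        have h1 := Subgroup.mem_map_of_mem (MulAut.conj g).toMonoidHom hx
        have h2 := hmap h1
        simpa using h2
      haveI := hNnorm
      rw [hRdef]
      apply Subgroup.normalClosure_le_normal
      obtain ⟨i1, hi1⟩ := hconjmap 1
      rw [aux_conj_one] at hi1
      intro b hb
      exact le_iSup₂ (f := fun i (_ : i ∈ Tstar) => S i) i1
        ⟨1, by rw [aux_conj_one, hi1]⟩ (hi1 ▸ hb)
    · refine iSup₂_le fun i hi => ?_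
      obtain ⟨g, hg⟩ := hi
      rw [← hg]
      intro x hx
      obtain ⟨b, hb, rfl⟩ := Subgroup.mem_map.mp hx
      have hbR : b ∈ R := Subgroup.le_normalClosure hb
      have h1 := Subgroup.normalClosure_normal.conj_mem b hbR g
      simpa using h1
  have hRA : R ≤ A := by
    haveI := hA
    exact Subgroup.normalClosure_le_normal (fun x hx => hBA hx)
  have hRbot : R ≠ ⊥ := by
    intro h
    have h1 : B ≤ (⊥ : Subgroup G) := h ▸ Subgroup.le_normalClosure
    exact aux_nonab_ne_bot hBsimple (le_bot_iff.mp h1)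
  have hmin : ∀ N : Subgroup G, N.Normal → N ≤ R → N ≠ ⊥ → N = R := by
    intro N hNn hNle hNne
    have h1 : N ≤ ⨆ i ∈ Tstar, S i := hRT ▸ hNle
    have h2 : ∀ a ∈ (⨆ i ∈ Tstar, S i : Subgroup G), ∀ x ∈ N, a * x * a⁻¹ ∈ N :=
      fun a _ x hx => hNn.conj_mem x hx a
    have h3 := aux_lnormal S hcomm hZ hS Tstar N h1 h2
    have h4 : ∃ i, i ∈ Tstar ∧ S i ≤ N := by
      by_contra hcon
      push_neg at hcon
      apply hNne
      rw [h3]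
      exact le_antisymm (iSup₂_le fun i hi => absurd hi.2 (hcon i hi.1)) bot_le
    obtain ⟨i1, hi1T, hi1N⟩ := h4
    obtain ⟨g1, hg1⟩ := hi1T
    have hBN : B ≤ N := by
      intro b hb
      have h5 : g1 * b * g1⁻¹ ∈ S i1 := by
        rw [← hg1]
        simpa using Subgroup.mem_map_of_mem (MulAut.conj g1).toMonoidHom hb
      have h7 : g1⁻¹ * (g1 * b * g1⁻¹) * (g1⁻¹)⁻¹ ∈ N := hNn.conj_mem _ (hi1N h5) g1⁻¹
      have heq : g1⁻¹ * (g1 * b * g1⁻¹) * (g1⁻¹)⁻¹ = b := by group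
      rwa [heq] at h7
    haveI := hNn
    exact le_antisymm hNle (Subgroup.normalClosure_le_normal (fun x hx => hBN hx))
  set C := A ⊓ Subgroup.centralizer (R : Set G) with hCdef
  have hCA : C ≤ A := inf_le_left
  have hCnorm : ∀ a ∈ A, ∀ x ∈ C, a * x * a⁻¹ ∈ C := by
    intro a ha x hx
    have hx' := Subgroup.mem_inf.mp hx
    refine Subgroup.mem_inf.mpr
      ⟨Subgroup.mul_mem _ (Subgroup.mul_mem _ ha hx'.1) (Subgroup.inv_mem _ ha), ?_⟩
    rw [Subgroup.mem_centralizer_iff]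
    intro r hr
    have hr' : a⁻¹ * r * a ∈ R := by
      have h1 := Subgroup.normalClosure_normal.conj_mem r hr a⁻¹
      simpa using h1
    have hcx := Subgroup.mem_centralizer_iff.mp hx'.2 (a⁻¹ * r * a) hr'
    have key1 : r * (a * x * a⁻¹) = a * ((a⁻¹ * r * a) * x) * a⁻¹ := by group
    have key2 : a * (x * (a⁻¹ * r * a)) * a⁻¹ = (a * x * a⁻¹) * r := by group
    rw [key1, hcx, key2]
  have hcover : ∀ i, S i ≤ R ⊔ C := by
    intro i
    by_cases hi : i ∈ Tstar
    · refine le_sup_of_le_left ?_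
      rw [hRT]
      exact le_iSup₂ (f := fun i (_ : i ∈ Tstar) => S i) i hi
    · refine le_sup_of_le_right (le_inf (hSle i) ?_)
      intro x hx
      rw [Subgroup.mem_centralizer_iff]
      intro r hr
      have hr2 : r ∈ ⨆ j ∈ Tstar, S j := by rw [← hRT]; exact hr
      have hsub : (⨆ j ∈ Tstar, S j) ≤ Subgroup.centralizer {x} :=
        iSup₂_le fun j hj y hy =>
          Subgroup.mem_centralizer_singleton_iff.mpr
            (hcomm j i (fun h : j = i => hi (h ▸ hj)) y hy x hx)
      exact Subgroup.mem_centralizer_singleton_iff.mp (hsub hr2)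
  have hRC_eq : R ⊔ C = A := by
    refine le_antisymm (sup_le hRA inf_le_left) ?_
    rw [← hsup]
    exact iSup_le hcover
  have hdisj : R ⊓ C = ⊥ := by
    rw [Subgroup.eq_bot_iff_forall]
    intro z hz
    have hz' := Subgroup.mem_inf.mp hz
    have hzR : z ∈ ⨆ i ∈ Tstar, S i := by rw [← hRT]; exact hz'.1
    have hzC : z ∈ Subgroup.centralizer (R : Set G) := (Subgroup.mem_inf.mp hz'.2).2
    have hFT : ∀ i, i ∈ Finset.univ.filter (· ∈ Tstar) ↔ i ∈ Tstar := by intro i; simp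
    have hzF : z ∈ ⨆ i ∈ Finset.univ.filter (· ∈ Tstar), S i :=
      (iSup₂_le fun i hi =>
        le_iSup₂ (f := fun i (_ : i ∈ Finset.univ.filter (· ∈ Tstar)) => S i) i
          ((hFT i).mpr hi)) hzR
    have hres := aux_ldecomp S hcomm hZ (Finset.univ.filter (· ∈ Tstar)) ∅ z hzF
      (by
        intro i hi _ x hx
        have hxR : x ∈ R := by
          rw [hRT]
          exact le_iSup₂ (f := fun i (_ : i ∈ Tstar) => S i) i ((hFT i).mp hi) hx
        exact Subgroup.mem_centralizer_iff.mp hzC x hxR)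
    have hb : (⨆ i ∈ Finset.univ.filter (· ∈ Tstar), ⨆ (_ : i ∈ (∅ : Set ι)), S i) ≤ ⊥ :=
      iSup_le fun i => iSup_le fun _ => iSup_le fun hiE => absurd hiE (Set.notMem_empty i)
    simpa using hb hres
  refine ⟨⟨Subgroup.normalClosure_normal, hRbot, hmin⟩, hRA, ?_, ?_, ?_, ?_⟩
  · intro i
    fin_cases i
    · simpa using hRA
    · simpa using hCA
  · intro i
    fin_cases i
    · have h1 : (R.subgroupOf A).Normal := Subgroup.normalClosure_normal.subgroupOf A
      simpa using h1
    · have h1 : (C.subgroupOf A).Normal :=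
        (Subgroup.normal_subgroupOf_iff hCA).mpr (fun h k hh hk => hCnorm k hk h hh)
      simpa using h1
  · apply le_antisymm
    · refine iSup_le fun i => ?_
      fin_cases i
      · simpa using hRA
      · simpa using hCA
    · rw [← hRC_eq]
      refine sup_le ?_ ?_
      · have h1 := le_iSup ![R, C] 0
        simpa using h1
      · have h1 := le_iSup ![R, C] 1
        simpa using h1
  · intro i
    fin_cases i
    · have hsupC : (⨆ (j : Fin 2) (_ : j ≠ 0), ![R, C] j) = C := by
        apply le_antisymm
        · refine iSup_le fun j => iSup_le fun hj => ?_
          fin_cases j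
          · exact absurd rfl hj
          · simp
        · have h1 := le_iSup₂ (f := fun (j : Fin 2) (_ : j ≠ (0 : Fin 2)) => ![R, C] j) 1
            (by decide)
          simpa using h1
      show ![R, C] 0 ⊓ (⨆ (j : Fin 2) (_ : j ≠ 0), ![R, C] j) = ⊥
      rw [hsupC]
      simpa using hdisj
    · have hsupR : (⨆ (j : Fin 2) (_ : j ≠ 1), ![R, C] j) = R := by
        apply le_antisymm
        · refine iSup_le fun j => iSup_le fun hj => ?_
          fin_cases j
          · simp
          · exact absurd rfl hj
        · have h1 := le_iSup₂ (f := fun (j : Fin 2) (_ : j ≠ (1 : Fin 2)) => ![R, C] j) 0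
            (by decide)
          simpa using h1
      show ![R, C] 1 ⊓ (⨆ (j : Fin 2) (_ : j ≠ 1), ![R, C] j) = ⊥
      rw [hsupR]
      have h1 : C ⊓ R = ⊥ := by rw [inf_comm]; exact hdisj
      simpa using h1
end

section
/- Let G be a finite group, N a normal subgroup of G, and p a prime. Consider the set of all normal subgroups K of G with K ≤ N such that N/K is an internal direct product of minimal normal subgroups of G/K each of which is a p-group (the case K = N, with the empty product, is allowed). This set has a smallest element, denoted Res_p(N,G); that is, Res_p(N,G) is a normal subgroup of G below N with N/Res_p(N,G) an internal direct product of minimal normal p-subgroups of G/Res_p(N,G), and Res_p(N,G) is contained in every normal subgroup K of G below N with that property. -/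
open scoped commutatorElement

/-- `N/K` is an internal direct product of minimal normal subgroups of `G/K`, each of
which is a `p`-group (`K` a normal subgroup of `G` with `K ≤ N`; the empty product,
i.e. `K = N`, is allowed). -/
def QuotDirProdMinP (G : Type) [Group G] [Finite G] (p : ℕ) (N K : Subgroup G)
    (hK : K.Normal) : Prop :=
  haveI := hK
  ∃ (k : ℕ) (B : Fin k → Subgroup (G ⧸ K)),
    (∀ i, IsMinimalNormal (B i) ∧ ∃ n : ℕ, Nat.card ↥(B i) = p ^ n) ∧
    IsInternalDirectProduct (N.map (QuotientGroup.mk' K)) B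

namespace Stmt8Aux

variable {G : Type} [Group G]

/-- membership in sup with left factor normal -/
lemma mem_sup_left_normal {U W : Subgroup G} (hU : U.Normal) {x : G} :
    x ∈ U ⊔ W ↔ ∃ u ∈ U, ∃ w ∈ W, u * w = x := by
  haveI := hU
  constructor
  · intro hx
    have hx' : x ∈ (↑(U ⊔ W) : Set G) := hx
    rw [Subgroup.normal_mul] at hx'
    simpa [Set.mem_mul] using hx'
  · rintro ⟨u, hu, w, hw, rfl⟩
    exact mul_mem (Subgroup.mem_sup_left hu) (Subgroup.mem_sup_right hw)

/-- membership in sup with right factor normal -/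
lemma mem_sup_right_normal {U W : Subgroup G} (hW : W.Normal) {x : G} :
    x ∈ U ⊔ W ↔ ∃ u ∈ U, ∃ w ∈ W, u * w = x := by
  haveI := hW
  constructor
  · intro hx
    have hx' : x ∈ (↑(U ⊔ W) : Set G) := hx
    rw [Subgroup.mul_normal] at hx'
    simpa [Set.mem_mul] using hx'
  · rintro ⟨u, hu, w, hw, rfl⟩
    exact mul_mem (Subgroup.mem_sup_left hu) (Subgroup.mem_sup_right hw)

lemma normal_sup {U W : Subgroup G} (hU : U.Normal) (hW : W.Normal) : (U ⊔ W).Normal := by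
  constructor
  intro x hx g
  rw [mem_sup_left_normal hU] at hx ⊢
  obtain ⟨u, hu, w, hw, rfl⟩ := hx
  exact ⟨g * u * g⁻¹, hU.conj_mem u hu g, g * w * g⁻¹, hW.conj_mem w hw g, by group⟩

lemma normal_iSup' {ι : Sort*} {A : ι → Subgroup G} (h : ∀ i, (A i).Normal) :
    (⨆ i, A i).Normal := by
  constructor
  intro x hx g
  refine Subgroup.iSup_induction A (C := fun y => g * y * g⁻¹ ∈ ⨆ i, A i) hx
    (fun i y hy => ?_) (by simpa using Subgroup.one_mem _) (fun y z hy hz => ?_)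
  · exact le_iSup A i ((h i).conj_mem y hy g)
  · show g * (y * z) * g⁻¹ ∈ _
    have : g * (y * z) * g⁻¹ = (g * y * g⁻¹) * (g * z * g⁻¹) := by group
    rw [this]; exact mul_mem hy hz

/-- Modular law for normal subgroups: `(H ⊔ C) ⊓ L = H ⊔ (C ⊓ L)` when `H ≤ L`, `C` normal. -/
lemma modular_law {H C L : Subgroup G} (hC : C.Normal) (hHL : H ≤ L) :
    (H ⊔ C) ⊓ L = H ⊔ (C ⊓ L) := by
  apply le_antisymm
  · intro x hx
    rw [Subgroup.mem_inf] at hx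
    obtain ⟨hx1, hx2⟩ := hx
    rw [mem_sup_right_normal hC] at hx1
    obtain ⟨h, hh, c, hc, rfl⟩ := hx1
    have hcL : c ∈ L := by
      have := mul_mem (L.inv_mem (hHL hh)) hx2
      simpa using this
    exact mul_mem (Subgroup.mem_sup_left hh) (Subgroup.mem_sup_right ⟨hc, hcL⟩)
  · exact sup_le (le_inf le_sup_left hHL)
      (le_inf (inf_le_left.trans le_sup_right) inf_le_right)

section Fin
variable {G : Type} [Group G]

lemma iSup_snoc {k : ℕ} (A : Fin k → Subgroup G) (B : Subgroup G) :
    (⨆ i, Fin.snoc A B i) = (⨆ i, A i) ⊔ B := by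
  apply le_antisymm
  · refine iSup_le fun i => ?_
    refine Fin.lastCases ?_ (fun j => ?_) i
    · rw [Fin.snoc_last]; exact le_sup_right
    · rw [Fin.snoc_castSucc]; exact le_trans (le_iSup A j) le_sup_left
  · refine sup_le (iSup_le fun j => ?_) ?_
    · have := le_iSup (Fin.snoc A B) (Fin.castSucc j)
      rwa [Fin.snoc_castSucc] at this
    · have := le_iSup (Fin.snoc A B) (Fin.last k)
      rwa [Fin.snoc_last] at this

lemma iSup_ne_snoc_last {k : ℕ} (A : Fin k → Subgroup G) (B : Subgroup G) :
    (⨆ j, ⨆ _ : j ≠ Fin.last k, Fin.snoc A B j) = ⨆ j, A j := by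
  apply le_antisymm
  · refine iSup_le fun j => iSup_le fun hj => ?_
    obtain ⟨j', rfl⟩ := Fin.exists_castSucc_eq.mpr hj
    rw [Fin.snoc_castSucc]
    exact le_iSup A j'
  · refine iSup_le fun j => ?_
    have h1 : (Fin.castSucc j) ≠ Fin.last k := Fin.ne_of_lt (Fin.castSucc_lt_last j)
    have := le_iSup₂ (f := fun l (_ : l ≠ Fin.last k) => Fin.snoc A B l) (Fin.castSucc j) h1
    rwa [Fin.snoc_castSucc] at this

lemma iSup_ne_snoc_cast {k : ℕ} (A : Fin k → Subgroup G) (B : Subgroup G) (i : Fin k) :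
    (⨆ j, ⨆ _ : j ≠ Fin.castSucc i, Fin.snoc A B j) = (⨆ j, ⨆ _ : j ≠ i, A j) ⊔ B := by
  apply le_antisymm
  · refine iSup_le fun j => iSup_le fun hj => ?_
    rcases Fin.eq_castSucc_or_eq_last j with ⟨j', rfl⟩ | rfl
    · rw [Fin.snoc_castSucc]
      have : j' ≠ i := fun h => hj (by rw [h])
      exact le_trans (le_iSup₂ (f := fun l (_ : l ≠ i) => A l) j' this) le_sup_left
    · rw [Fin.snoc_last]; exact le_sup_right
  · refine sup_le (iSup_le fun j => iSup_le fun hj => ?_) ?_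
    · have h1 : (Fin.castSucc j) ≠ Fin.castSucc i := fun h => hj (Fin.castSucc_injective _ h)
      have := le_iSup₂ (f := fun l (_ : l ≠ Fin.castSucc i) => Fin.snoc A B l)
        (Fin.castSucc j) h1
      rwa [Fin.snoc_castSucc] at this
    · have h1 : (Fin.last k) ≠ Fin.castSucc i := (Fin.ne_of_gt (Fin.castSucc_lt_last i))
      have := le_iSup₂ (f := fun l (_ : l ≠ Fin.castSucc i) => Fin.snoc A B l) (Fin.last k) h1
      rwa [Fin.snoc_last] at this

end Fin
section Exp

/-- A minimal normal subgroup of `p`-power order is elementary abelian. -/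
lemma minNormal_elem_abelian {H : Type} [Group H] [Finite H] {p : ℕ} (hp : p.Prime)
    {B : Subgroup H} (hmin : IsMinimalNormal B) (hcard : ∃ n : ℕ, Nat.card ↥B = p ^ n) :
    (∀ x ∈ B, ∀ y ∈ B, x * y = y * x) ∧ ∀ x ∈ B, x ^ p = 1 := by
  haveI : Fact p.Prime := ⟨hp⟩
  obtain ⟨hBnorm, hBne, hBmin⟩ := hmin
  have hPB : IsPGroup p ↥B := IsPGroup.iff_card.mpr hcard
  haveI : Nontrivial ↥B := (Subgroup.nontrivial_iff_ne_bot B).mpr hBne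
  -- the "central part" Z
  set Z : Subgroup H := Subgroup.centralizer (B : Set H) ⊓ B with hZdef
  have hZnorm : Z.Normal := by
    constructor
    intro z hz g
    rw [Subgroup.mem_inf] at hz ⊢
    obtain ⟨hz1, hz2⟩ := hz
    refine ⟨?_, hBnorm.conj_mem z hz2 g⟩
    rw [Subgroup.mem_centralizer_iff] at hz1 ⊢
    intro b hb
    have hb' : g⁻¹ * b * g ∈ B := by
      have := hBnorm.conj_mem b hb g⁻¹
      simpa using this
    have hzb : (g⁻¹ * b * g) * z = z * (g⁻¹ * b * g) := hz1 _ hb'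
    calc b * (g * z * g⁻¹) = g * ((g⁻¹ * b * g) * z) * g⁻¹ := by group
      _ = g * (z * (g⁻¹ * b * g)) * g⁻¹ := by rw [hzb]
      _ = (g * z * g⁻¹) * b := by group
  have hZne : Z ≠ ⊥ := by
    haveI : Nontrivial (Subgroup.center ↥B) := hPB.center_nontrivial
    obtain ⟨w, hw⟩ := exists_ne (1 : Subgroup.center ↥B)
    have hwmem : ((w : ↥B) : H) ∈ Z := by
      rw [Subgroup.mem_inf]
      refine ⟨?_, (w : ↥B).2⟩
      rw [Subgroup.mem_centralizer_iff]
      intro b hb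
      have := (Subgroup.mem_center_iff.mp w.2) ⟨b, hb⟩
      exact congrArg Subtype.val this
    intro hbot
    rw [hbot, Subgroup.mem_bot] at hwmem
    apply hw
    have : (w : ↥B) = 1 := by exact_mod_cast hwmem
    exact_mod_cast this
  have hZB : Z = B := hBmin Z hZnorm inf_le_right hZne
  have hcomm : ∀ x ∈ B, ∀ y ∈ B, x * y = y * x := by
    intro x hx y hy
    have : y ∈ Z := hZB ▸ hy
    rw [Subgroup.mem_inf] at this
    exact this.1 x hx
  refine ⟨hcomm, ?_⟩
  -- the subgroup of elements of order dividing p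
  set Ω : Subgroup H :=
    { carrier := {x | x ∈ B ∧ x ^ p = 1}
      one_mem' := ⟨B.one_mem, one_pow p⟩
      mul_mem' := by
        rintro a b ⟨ha, hap⟩ ⟨hb, hbp⟩
        refine ⟨B.mul_mem ha hb, ?_⟩
        have hab : Commute a b := hcomm a ha b hb
        rw [hab.mul_pow, hap, hbp, one_mul]
      inv_mem' := by
        rintro a ⟨ha, hap⟩
        exact ⟨B.inv_mem ha, by rw [inv_pow, hap, inv_one]⟩ } with hΩdef
  have hΩnorm : Ω.Normal := by
    constructor
    rintro a ⟨ha, hap⟩ g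
    refine ⟨hBnorm.conj_mem a ha g, ?_⟩
    have : (g * a * g⁻¹) ^ p = g * a ^ p * g⁻¹ := by
      rw [show g * a * g⁻¹ = MulAut.conj g a from rfl, ← map_pow]; rfl
    rw [this, hap, mul_one, mul_inv_cancel]
  have hΩB : Ω ≤ B := fun x hx => hx.1
  have hΩne : Ω ≠ ⊥ := by
    obtain ⟨b, hb⟩ := exists_ne (1 : ↥B)
    obtain ⟨k, hk⟩ := hPB b
    have hbH : (b : H) ^ (p ^ k) = 1 := by exact_mod_cast congrArg Subtype.val hk
    have hdvd : orderOf (b : H) ∣ p ^ k := orderOf_dvd_of_pow_eq_one hbH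
    obtain ⟨m, hmk, hm⟩ := (Nat.dvd_prime_pow hp).mp hdvd
    have hbne1 : (b : H) ≠ 1 := by
      intro h; apply hb; exact_mod_cast h
    have hm0 : m ≠ 0 := by
      intro h; rw [h, pow_zero] at hm
      exact hbne1 (orderOf_eq_one_iff.mp hm)
    set y : H := (b : H) ^ (p ^ (m - 1)) with hydef
    have hyp : y ^ p = 1 := by
      have hmm : m - 1 + 1 = m := Nat.succ_pred_eq_of_pos (Nat.pos_of_ne_zero hm0)
      rw [hydef, ← pow_mul, ← pow_succ, hmm, ← hm, pow_orderOf_eq_one]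
    have hyne : y ≠ 1 := by
      intro h
      have := orderOf_dvd_of_pow_eq_one (n := p ^ (m - 1)) h
      rw [hm] at this
      have hlt : p ^ (m - 1) < p ^ m :=
        Nat.pow_lt_pow_right hp.one_lt (Nat.pred_lt hm0)
      have hle := Nat.le_of_dvd (Nat.pow_pos hp.pos) this
      omega
    have hymem : y ∈ Ω := ⟨B.pow_mem b.2 _, hyp⟩
    intro hbot
    rw [hbot, Subgroup.mem_bot] at hymem
    exact hyne hymem
  have : Ω = B := hBmin Ω hΩnorm hΩB hΩne
  intro x hx
  exact (this ▸ hx : x ∈ Ω).2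

end Exp

section Core

variable {G : Type} [Group G]

/-- `A/K` is a chief factor-to-be: `K < A` and nothing normal strictly between. -/
def Cov (K A : Subgroup G) : Prop :=
  K < A ∧ ∀ B : Subgroup G, B.Normal → K < B → B < A → False

/-- A family of "atoms over `K`" realizing the direct decomposition of `N/K`. -/
structure GoodFam (N K : Subgroup G) (k : ℕ) (A : Fin k → Subgroup G) : Prop where
  norm : ∀ i, (A i).Normal
  leN : ∀ i, A i ≤ N
  cov : ∀ i, Cov K (A i)
  sup : K ⊔ (⨆ i, A i) = N
  ind : ∀ i, A i ⊓ (K ⊔ ⨆ j, ⨆ _ : j ≠ i, A j) = K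

/-- Internal version of `QuotDirProdMinP`. -/
def Good (p : ℕ) (N K : Subgroup G) : Prop :=
  K.Normal ∧ K ≤ N ∧ (∀ x ∈ N, x ^ p ∈ K) ∧ ∃ k A, GoodFam N K k A

lemma good_self (p : ℕ) {N : Subgroup G} (hN : N.Normal) : Good p N N := by
  refine ⟨hN, le_rfl, fun x hx => N.pow_mem hx p, 0, Fin.elim0, ?_, ?_, ?_, ?_, ?_⟩ <;>
    first
      | exact fun i => i.elim0
      | simp

/-- Complement extraction: from a `GoodFam` over `K`, every intermediate normal
subgroup has a complement over `K` inside `N`. -/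
lemma comp_of_good [Finite G] {p : ℕ} {N K : Subgroup G} (hg : Good p N K) :
    ∀ L : Subgroup G, L.Normal → K ≤ L → L ≤ N →
      ∃ M : Subgroup G, M.Normal ∧ K ≤ M ∧ M ≤ N ∧ L ⊓ M = K ∧ L ⊔ M = N := by
  classical
  obtain ⟨hKnorm, hKN, _, k, A, hfam⟩ := hg
  intro L hLnorm hKL hLN
  haveI : Finite (Subgroup G) := Finite.of_injective (fun H => (H : Set G)) SetLike.coe_injective
  set S : Set (Subgroup G) := {M | M.Normal ∧ K ≤ M ∧ M ≤ N ∧ L ⊓ M = K} with hSdef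
  have hKS : K ∈ S := ⟨hKnorm, le_rfl, hKN, inf_eq_right.mpr hKL⟩
  obtain ⟨M, hMS, hMmax⟩ := Set.Finite.exists_maximalFor id S (Set.toFinite S) ⟨K, hKS⟩
  obtain ⟨hMnorm, hKM, hMN, hLM⟩ := hMS
  refine ⟨M, hMnorm, hKM, hMN, hLM, ?_⟩
  have hsub : ∀ i, A i ≤ L ⊔ M := by
    intro i
    by_contra hi
    have hLMnorm : (L ⊔ M).Normal := normal_sup hLnorm hMnorm
    -- A i ⊓ (L ⊔ M) = K
    have hD : A i ⊓ (L ⊔ M) = K := by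
      rcases eq_or_lt_of_le (le_inf ((hfam.cov i).1.le) (le_trans hKL le_sup_left) :
        K ≤ A i ⊓ (L ⊔ M)) with h | h
      · exact h.symm
      · exfalso
        refine (hfam.cov i).2 (A i ⊓ (L ⊔ M)) (by haveI := hfam.norm i; haveI := hLMnorm; exact Subgroup.normal_inf_normal _ _) h ?_
        refine lt_of_le_of_ne inf_le_left fun h' => hi ?_
        rw [← h']; exact inf_le_right
    -- M' := M ⊔ A i is a bigger member of S
    set M' := M ⊔ A i with hM'def
    have hM'S : M' ∈ S := by
      refine ⟨normal_sup hMnorm (hfam.norm i), le_trans hKM le_sup_left,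
        sup_le hMN (hfam.leN i), ?_⟩
      apply le_antisymm
      · intro x hx
        rw [Subgroup.mem_inf] at hx
        obtain ⟨hxL, hxM'⟩ := hx
        rw [mem_sup_right_normal (hfam.norm i)] at hxM'
        obtain ⟨m, hm, a, ha, rfl⟩ := hxM'
        have haK : a ∈ K := by
          have : a ∈ A i ⊓ (L ⊔ M) := by
            refine ⟨ha, ?_⟩
            have : a = m⁻¹ * (m * a) := by group
            rw [this]
            exact mul_mem (Subgroup.mem_sup_right (M.inv_mem hm)) (Subgroup.mem_sup_left hxL)
          rwa [hD] at this
        have : m * a ∈ M := M.mul_mem hm (hKM haK)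
        rw [← hLM]; exact ⟨hxL, this⟩
      · exact le_inf hKL (le_trans hKM le_sup_left)
    have : M = M' := le_antisymm le_sup_left (hMmax hM'S le_sup_left)
    apply hi
    have : A i ≤ M := by rw [this]; exact le_sup_right
    exact le_trans this le_sup_right
  apply le_antisymm (sup_le hLN hMN)
  rw [← hfam.sup]
  exact sup_le (le_trans hKL le_sup_left) (iSup_le hsub)

end Core

section Core2

variable {G : Type} [Group G]

/-- Complementedness passes to the intersection (subdirect closure). -/
lemma comp_inf {N K1 K2 : Subgroup G}
    (h1 : ∀ L : Subgroup G, L.Normal → K1 ≤ L → L ≤ N →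
      ∃ M : Subgroup G, M.Normal ∧ K1 ≤ M ∧ M ≤ N ∧ L ⊓ M = K1 ∧ L ⊔ M = N)
    (h2 : ∀ L : Subgroup G, L.Normal → K2 ≤ L → L ≤ N →
      ∃ M : Subgroup G, M.Normal ∧ K2 ≤ M ∧ M ≤ N ∧ L ⊓ M = K2 ∧ L ⊔ M = N)
    (hK1 : K1.Normal) (hK2 : K2.Normal) (hK1N : K1 ≤ N) (hK2N : K2 ≤ N) :
    ∀ L : Subgroup G, L.Normal → K1 ⊓ K2 ≤ L → L ≤ N →
      ∃ M : Subgroup G, M.Normal ∧ K1 ⊓ K2 ≤ M ∧ M ≤ N ∧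
        L ⊓ M = K1 ⊓ K2 ∧ L ⊔ M = N := by
  intro L hLnorm hJL hLN
  obtain ⟨C1, hC1norm, hK1C1, hC1N, hC1inf, hC1sup⟩ :=
    h1 (L ⊔ K1) (normal_sup hLnorm hK1) le_sup_right (sup_le hLN hK1N)
  have hLC1 : L ⊓ C1 ≤ K1 := by
    rw [← hC1inf]; exact inf_le_inf_right C1 le_sup_left
  have hLsupC1 : L ⊔ C1 = N := by
    rw [← hC1sup, sup_assoc, sup_eq_right.mpr hK1C1]
  have hLC1norm : (L ⊓ C1).Normal := by
    haveI := hLnorm; haveI := hC1norm; exact Subgroup.normal_inf_normal _ _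
  obtain ⟨C2, hC2norm, hK2C2, hC2N, hC2inf, hC2sup⟩ :=
    h2 ((L ⊓ C1) ⊔ K2) (normal_sup hLC1norm hK2) le_sup_right
      (sup_le (le_trans inf_le_left hLN) hK2N)
  have hLC1supC2 : (L ⊓ C1) ⊔ C2 = N := by
    rw [← hC2sup, sup_assoc, sup_eq_right.mpr hK2C2]
  refine ⟨C1 ⊓ C2, by haveI := hC1norm; haveI := hC2norm; exact Subgroup.normal_inf_normal _ _,
    le_inf (le_trans inf_le_left hK1C1) (le_trans inf_le_right hK2C2),
    le_trans inf_le_left hC1N, ?_, ?_⟩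
  · apply le_antisymm
    · refine le_inf ?_ ?_
      · calc L ⊓ (C1 ⊓ C2) ≤ L ⊓ C1 := inf_le_inf_left L inf_le_left
          _ ≤ K1 := hLC1
      · have : L ⊓ (C1 ⊓ C2) ≤ ((L ⊓ C1) ⊔ K2) ⊓ C2 := by
          refine le_inf ?_ (le_trans inf_le_right inf_le_right)
          refine le_trans ?_ le_sup_left
          exact le_inf inf_le_left (le_trans inf_le_right inf_le_left)
        rw [hC2inf] at this
        exact this
    · exact le_inf hJL (le_inf (le_trans inf_le_left hK1C1) (le_trans inf_le_right hK2C2))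
  · -- L ⊔ (C1 ⊓ C2) = N
    have hmod : ((L ⊓ C1) ⊔ C2) ⊓ C1 = (L ⊓ C1) ⊔ (C2 ⊓ C1) :=
      modular_law hC2norm inf_le_right
    rw [hLC1supC2] at hmod
    have hC1eq : C1 = (L ⊓ C1) ⊔ (C2 ⊓ C1) := by
      rw [← hmod, inf_eq_right.mpr hC1N]
    calc L ⊔ (C1 ⊓ C2) = L ⊔ (C2 ⊓ C1) := by rw [inf_comm]
      _ = (L ⊔ (L ⊓ C1)) ⊔ (C2 ⊓ C1) := by rw [sup_eq_left.mpr (inf_le_left : L ⊓ C1 ≤ L)]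
      _ = L ⊔ ((L ⊓ C1) ⊔ (C2 ⊓ C1)) := by rw [sup_assoc]
      _ = L ⊔ C1 := by rw [← hC1eq]
      _ = N := hLsupC1

/-- Building a `GoodFam` from complementedness. -/
lemma build_fam [Finite G] {N J : Subgroup G} (hJ : J.Normal) (hJN : J ≤ N)
    (hcomp : ∀ L : Subgroup G, L.Normal → J ≤ L → L ≤ N →
      ∃ M : Subgroup G, M.Normal ∧ J ≤ M ∧ M ≤ N ∧ L ⊓ M = J ∧ L ⊔ M = N) :
    ∃ k A, GoodFam N J k A := by
  classical
  haveI : Finite (Subgroup G) := Finite.of_injective (fun H => (H : Set G)) SetLike.coe_injective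
  -- partial families
  have main : ∀ C : Subgroup G, C.Normal → J ≤ C → C ≤ N →
      (∃ (k : ℕ) (A : Fin k → Subgroup G), (∀ i, (A i).Normal) ∧ (∀ i, A i ≤ N) ∧
        (∀ i, Cov J (A i)) ∧ J ⊔ (⨆ i, A i) = C ∧
        (∀ i, A i ⊓ (J ⊔ ⨆ j, ⨆ _ : j ≠ i, A j) = J)) →
      ∃ k A, GoodFam N J k A := by
    have wf : WellFounded ((· > ·) : Subgroup G → Subgroup G → Prop) := wellFounded_gt
    intro C
    induction C using wf.induction with
    | _ C IH =>
      intro hCnorm hJC hCN hpart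
      obtain ⟨k, A, hnorm, hleN, hcov, hsupC, hind⟩ := hpart
      rcases eq_or_lt_of_le hCN with hCeq | hClt
      · exact ⟨k, A, hnorm, hleN, hcov, hCeq ▸ hsupC, hind⟩
      -- get a complement M of C and an atom B ≤ M
      obtain ⟨M, hMnorm, hJM, hMN, hCM, hCMsup⟩ := hcomp C hCnorm hJC hCN
      have hJMlt : J < M := by
        rcases eq_or_lt_of_le hJM with h | h
        · exfalso
          rw [← h] at hCMsup
          rw [sup_eq_left.mpr (h ▸ hJC : J ≤ C)] at hCMsup
          exact absurd hCMsup hClt.ne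
        · exact h
      -- a minimal normal subgroup over J inside M
      obtain ⟨B, hBmem, hBmin⟩ := Set.Finite.exists_minimalFor (id : Subgroup G → Subgroup G)
        {D : Subgroup G | D.Normal ∧ J < D ∧ D ≤ M} (Set.toFinite _) ⟨M, hMnorm, hJMlt, le_rfl⟩
      obtain ⟨hBnorm, hJB, hBM⟩ := hBmem
      have hBcov : Cov J B := by
        refine ⟨hJB, fun D hDnorm hJD hDB => ?_⟩
        have : B = D := le_antisymm (hBmin ⟨hDnorm, hJD, le_trans hDB.le hBM⟩ hDB.le) hDB.le
        exact hDB.ne (this.symm)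
      have hBC : B ⊓ C = J := by
        apply le_antisymm
        · calc B ⊓ C ≤ C ⊓ M := le_inf inf_le_right (le_trans inf_le_left hBM)
            _ = J := hCM
        · exact le_inf hJB.le hJC
      have hBnotC : ¬ B ≤ C := by
        intro h
        have : B = J := by rw [← hBC, inf_eq_left.mpr h]
        exact hJB.ne' this
      set C' := C ⊔ B with hC'def
      have hCC' : C < C' := lt_of_le_of_ne le_sup_left fun h => hBnotC (h ▸ le_sup_right)
      -- extended family
      refine IH C' hCC' (normal_sup hCnorm hBnorm) (le_trans hJC le_sup_left)
        (sup_le hCN (le_trans hBM hMN)) ⟨k + 1, Fin.snoc A B, ?_, ?_, ?_, ?_, ?_⟩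
      · intro i
        rcases Fin.eq_castSucc_or_eq_last i with ⟨j, rfl⟩ | rfl
        · rw [Fin.snoc_castSucc]; exact hnorm j
        · rw [Fin.snoc_last]; exact hBnorm
      · intro i
        rcases Fin.eq_castSucc_or_eq_last i with ⟨j, rfl⟩ | rfl
        · rw [Fin.snoc_castSucc]; exact hleN j
        · rw [Fin.snoc_last]; exact le_trans hBM hMN
      · intro i
        rcases Fin.eq_castSucc_or_eq_last i with ⟨j, rfl⟩ | rfl
        · rw [Fin.snoc_castSucc]; exact hcov j
        · rw [Fin.snoc_last]; exact hBcov
      · rw [iSup_snoc, ← sup_assoc, hsupC]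
      · intro i
        rcases Fin.eq_castSucc_or_eq_last i with ⟨j, rfl⟩ | rfl
        · rw [Fin.snoc_castSucc, iSup_ne_snoc_cast, ← sup_assoc]
          have hEC : J ⊔ (⨆ l, ⨆ _ : l ≠ j, A l) ≤ C := by
            rw [← hsupC]
            exact sup_le le_sup_left
              (le_trans (iSup_le fun l => iSup_le fun _ => le_iSup A l) le_sup_right)
          have hAjC : A j ≤ C := le_trans (le_trans (le_iSup A j) le_sup_right) hsupC.le
          apply le_antisymm
          · intro x hx
            rw [Subgroup.mem_inf] at hx
            obtain ⟨hxA, hxEB⟩ := hx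
            rw [mem_sup_right_normal hBnorm] at hxEB
            obtain ⟨e, he, b, hb, rfl⟩ := hxEB
            have hbJ : b ∈ J := by
              have hbC : b ∈ C := by
                have hb' : b = e⁻¹ * (e * b) := by group
                rw [hb']
                exact C.mul_mem (C.inv_mem (hEC he)) (hAjC hxA)
              rw [← hBC]; exact ⟨hb, hbC⟩
            have hmem : e * b ∈ A j ⊓ (J ⊔ ⨆ l, ⨆ _ : l ≠ j, A l) :=
              ⟨hxA, mul_mem he (Subgroup.mem_sup_left hbJ)⟩
            rw [hind j] at hmem
            exact hmem
          · exact le_inf (hcov j).1.le (le_trans le_sup_left le_sup_left)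
        · rw [Fin.snoc_last, iSup_ne_snoc_last, hsupC]
          exact hBC
  exact main J hJ le_rfl hJN ⟨0, Fin.elim0, fun i => i.elim0, fun i => i.elim0,
    fun i => i.elim0, by simp, fun i => i.elim0⟩

/-- `Good` is closed under intersections. -/
lemma good_inf [Finite G] {p : ℕ} {N K1 K2 : Subgroup G}
    (h1 : Good p N K1) (h2 : Good p N K2) : Good p N (K1 ⊓ K2) := by
  refine ⟨by haveI := h1.1; haveI := h2.1; exact Subgroup.normal_inf_normal _ _,
    le_trans inf_le_left h1.2.1, fun x hx => ⟨h1.2.2.1 x hx, h2.2.2.1 x hx⟩, ?_⟩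
  exact build_fam (by haveI := h1.1; haveI := h2.1; exact Subgroup.normal_inf_normal _ _)
    (le_trans inf_le_left h1.2.1)
    (comp_inf (comp_of_good h1) (comp_of_good h2) h1.1 h2.1 h1.2.1 h2.2.1)

end Core2

section Bridge

variable {G : Type} [Group G] [Finite G]

lemma ker_facts {K : Subgroup G} (hK : K.Normal) :
    haveI := hK
    ∀ x : G, (QuotientGroup.mk' K) x = 1 ↔ x ∈ K := by
  haveI := hK
  intro x
  rw [← MonoidHom.mem_ker, QuotientGroup.ker_mk']

lemma good_to_quot {p : ℕ} (hp : p.Prime) {N K : Subgroup G} (hK : K.Normal)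
    (hg : Good p N K) : QuotDirProdMinP G p N K hK := by
  haveI := hK
  obtain ⟨hKnorm, hKN, hpow, k, A, hfam⟩ := hg
  set π : G →* G ⧸ K := QuotientGroup.mk' K with hπdef
  have hsurj : Function.Surjective π := QuotientGroup.mk'_surjective K
  have hker : ∀ x : G, π x = 1 ↔ x ∈ K := ker_facts hK
  have hmapK : K.map π = ⊥ := by
    apply le_antisymm _ bot_le
    rintro x ⟨g, hg, rfl⟩
    rw [Subgroup.mem_bot]
    exact (hker g).mpr hg
  have hmap2 : ∀ i : Fin k, (⨆ j, ⨆ _ : j ≠ i, A j).map π = ⨆ j, ⨆ _ : j ≠ i, (A j).map π := by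
    intro i
    simp only [Subgroup.map_iSup]
  refine ⟨k, fun i => (A i).map π, fun i => ⟨⟨?_, ?_, ?_⟩, ?_⟩, ?_, ?_, ?_, ?_⟩
  · exact (hfam.norm i).map π hsurj
  · -- nontrivial
    obtain ⟨a, haA, haK⟩ := SetLike.exists_of_lt (hfam.cov i).1
    intro hbot
    have hbot' : (A i).map π = ⊥ := hbot
    apply haK
    have : π a ∈ (A i).map π := Subgroup.mem_map_of_mem π haA
    rw [hbot', Subgroup.mem_bot] at this
    exact (hker a).mp this
  · -- minimality
    intro C hCnorm hCle hCne
    have hcomap : ((A i).map π).comap π = A i := by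
      rw [Subgroup.comap_map_eq, QuotientGroup.ker_mk', sup_eq_left.mpr (hfam.cov i).1.le]
    have hKC : K ≤ C.comap π := by
      intro x hx
      show π x ∈ C
      rw [(hker x).mpr hx]
      exact C.one_mem
    have hKCne : K ≠ C.comap π := by
      intro h
      haveI := (Subgroup.nontrivial_iff_ne_bot C).mpr hCne
      obtain ⟨c, hc1⟩ := exists_ne (1 : ↥C)
      obtain ⟨x, hx⟩ := hsurj (c : G ⧸ K)
      have hxC : x ∈ C.comap π := by show π x ∈ C; rw [hx]; exact c.2
      rw [← h] at hxC
      apply hc1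
      ext
      rw [← hx]
      exact (hker x).mpr hxC
    have hCA : C.comap π ≤ A i := by rw [← hcomap]; exact Subgroup.comap_mono hCle
    have heq : C.comap π = A i := by
      rcases lt_or_eq_of_le hCA with h | h
      · exact absurd ((hfam.cov i).2 (C.comap π) (hCnorm.comap π)
          (lt_of_le_of_ne hKC hKCne) h) not_false
      · exact h
    rw [← Subgroup.map_comap_eq_self_of_surjective hsurj C, heq]
  · -- p-group
    haveI : Fact p.Prime := ⟨hp⟩
    refine IsPGroup.exists_card_eq ?_
    intro g
    refine ⟨1, ?_⟩
    obtain ⟨a, haA, ha⟩ := g.2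
    have hstep : ((g ^ p ^ 1 : ↥((A i).map π)) : G ⧸ K) = 1 := by
      push_cast
      rw [← ha, pow_one, ← map_pow]
      exact (hker (a ^ p)).mpr (hpow a (hfam.leN i haA))
    exact Subtype.ext hstep
  · exact fun i => Subgroup.map_mono (hfam.leN i)
  · exact fun i => ((hfam.norm i).map π hsurj).subgroupOf _
  · rw [← Subgroup.map_iSup, ← bot_sup_eq ((⨆ i, A i).map π), ← hmapK, ← Subgroup.map_sup,
      hfam.sup]
  · intro i
    apply le_antisymm _ bot_le
    intro x hx
    rw [Subgroup.mem_inf] at hx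
    obtain ⟨hx1, hx2⟩ := hx
    obtain ⟨a, haA, rfl⟩ := hx1
    rw [← hmap2 i] at hx2
    obtain ⟨c, hc, hceq⟩ := hx2
    have hkmem : a * c⁻¹ ∈ K := by
      rw [← hker]
      rw [map_mul, map_inv, hceq, mul_inv_cancel]
    have haK : a ∈ K := by
      have : a = (a * c⁻¹) * c := by group
      have hmem : a ∈ K ⊔ ⨆ j, ⨆ _ : j ≠ i, A j := by
        rw [this]
        exact mul_mem (Subgroup.mem_sup_left hkmem) (Subgroup.mem_sup_right hc)
      have := hfam.ind i
      exact (this ▸ Subgroup.mem_inf.mpr ⟨haA, hmem⟩ : a ∈ K)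
    rw [Subgroup.mem_bot]
    exact (hker a).mpr haK

end Bridge

section Bridge2

variable {G : Type} [Group G] [Finite G]

lemma quot_to_good {p : ℕ} (hp : p.Prime) {N K : Subgroup G} (hK : K.Normal)
    (hKN : K ≤ N) (hq : QuotDirProdMinP G p N K hK) : Good p N K := by
  haveI := hK
  obtain ⟨k, B, hmin, hle, hnorm', hsup, hind⟩ := hq
  set π : G →* G ⧸ K := QuotientGroup.mk' K with hπdef
  have hsurj : Function.Surjective π := QuotientGroup.mk'_surjective K
  have hker : ∀ x : G, π x = 1 ↔ x ∈ K := ker_facts hK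
  have hmapK : K.map π = ⊥ := by
    apply le_antisymm _ bot_le
    rintro x ⟨g, hg, rfl⟩
    rw [Subgroup.mem_bot]
    exact (hker g).mpr hg
  have hBnorm : ∀ i, (B i).Normal := fun i => (hmin i).1.1
  set S : Subgroup (G ⧸ K) := ⨆ i, B i with hSdef
  -- elementwise commutation and exponent
  have helem := fun i => minNormal_elem_abelian hp (hmin i).1 (hmin i).2
  have hdisj : ∀ i j : Fin k, j ≠ i → B i ⊓ B j = ⊥ := by
    intro i j hji
    apply le_antisymm _ bot_le
    have h1 : B j ≤ ⨆ l, ⨆ _ : l ≠ i, B l :=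
      le_iSup₂ (f := fun l (_ : l ≠ i) => B l) j hji
    calc B i ⊓ B j ≤ B i ⊓ ⨆ l, ⨆ _ : l ≠ i, B l := inf_le_inf_left _ h1
      _ = ⊥ := hind i
  have hcross : ∀ i j : Fin k, ∀ x ∈ B i, ∀ y ∈ B j, x * y = y * x := by
    intro i j x hx y hy
    rcases eq_or_ne j i with rfl | hij
    · exact (helem j).1 x hx y hy
    · have hc1 : ⁅x, y⁆ ∈ B i := by
        have : ⁅x, y⁆ = x * (y * x⁻¹ * y⁻¹) := by group
        rw [this]
        exact (B i).mul_mem hx (by simpa using (hBnorm i).conj_mem _ ((B i).inv_mem hx) y)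
      have hc2 : ⁅x, y⁆ ∈ B j := by
        have : ⁅x, y⁆ = (x * y * x⁻¹) * y⁻¹ := by group
        rw [this]
        exact (B j).mul_mem (by simpa using (hBnorm j).conj_mem _ hy x) ((B j).inv_mem hy)
      have : ⁅x, y⁆ ∈ B i ⊓ B j := ⟨hc1, hc2⟩
      rw [hdisj i j hij, Subgroup.mem_bot] at this
      exact (commutatorElement_eq_one_iff_commute.mp this)
  have hstep1 : ∀ i : Fin k, ∀ x ∈ S, ∀ y ∈ B i, y * x = x * y := by
    intro i x hx
    have hcent : S ≤ Subgroup.centralizer (B i : Set (G ⧸ K)) := by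
      refine iSup_le fun j z hz => Subgroup.mem_centralizer_iff.mpr fun h hh => ?_
      exact hcross i j h hh z hz
    exact fun y hy => Subgroup.mem_centralizer_iff.mp (hcent hx) y hy
  have hscomm : ∀ x ∈ S, ∀ y ∈ S, x * y = y * x := by
    intro x hx y hy
    have hcent : S ≤ Subgroup.centralizer ({x} : Set (G ⧸ K)) := by
      refine iSup_le fun i z hz => Subgroup.mem_centralizer_iff.mpr ?_
      rintro h rfl
      exact (hstep1 i h hx z hz).symm
    exact Subgroup.mem_centralizer_iff.mp (hcent hy) x rfl
  have hsexp : ∀ x ∈ S, x ^ p = 1 := by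
    set Ω : Subgroup (G ⧸ K) :=
      { carrier := {x | x ∈ S ∧ x ^ p = 1}
        one_mem' := ⟨S.one_mem, one_pow p⟩
        mul_mem' := by
          rintro a b ⟨ha, hap⟩ ⟨hb, hbp⟩
          refine ⟨S.mul_mem ha hb, ?_⟩
          have hab : Commute a b := hscomm a ha b hb
          rw [hab.mul_pow, hap, hbp, one_mul]
        inv_mem' := by
          rintro a ⟨ha, hap⟩
          exact ⟨S.inv_mem ha, by rw [inv_pow, hap, inv_one]⟩ } with hΩdef
    have hSΩ : S ≤ Ω := by
      refine iSup_le fun i x hx => ?_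
      exact ⟨le_iSup B i hx, (helem i).2 x hx⟩
    exact fun x hx => (hSΩ hx).2
  have hpow : ∀ x ∈ N, x ^ p ∈ K := by
    intro x hx
    have h1 : π x ∈ S := by
      rw [hsup]
      exact Subgroup.mem_map_of_mem π hx
    have : π (x ^ p) = 1 := by rw [map_pow]; exact hsexp _ h1
    exact (hker _).mp this
  refine ⟨hK, hKN, hpow, k, fun i => (B i).comap π, ?_, ?_, ?_, ?_, ?_⟩
  · exact fun i => (hBnorm i).comap π
  · intro i
    have := Subgroup.comap_mono (f := π) (hle i)
    rwa [Subgroup.comap_map_eq, QuotientGroup.ker_mk', sup_eq_left.mpr hKN] at this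
  · intro i
    have hKle : K ≤ (B i).comap π := by
      intro x hx
      show π x ∈ B i
      rw [(hker x).mpr hx]
      exact (B i).one_mem
    have hmapA : ((B i).comap π).map π = B i := Subgroup.map_comap_eq_self_of_surjective hsurj _
    constructor
    · refine lt_of_le_of_ne hKle fun h => ?_
      haveI := (Subgroup.nontrivial_iff_ne_bot (B i)).mpr (hmin i).1.2.1
      obtain ⟨c, hc1⟩ := exists_ne (1 : ↥(B i))
      obtain ⟨x, hx⟩ := hsurj (c : G ⧸ K)
      have hxc : x ∈ (B i).comap π := by show π x ∈ B i; rw [hx]; exact c.2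
      rw [← h] at hxc
      apply hc1
      ext
      rw [← hx]
      exact (hker x).mpr hxc
    · intro D hDnorm hKD hDA
      have hD'norm : (D.map π).Normal := hDnorm.map π hsurj
      have hD'le : D.map π ≤ B i := by
        have := Subgroup.map_mono (f := π) hDA.le
        rwa [hmapA] at this
      have hD'ne : D.map π ≠ ⊥ := by
        obtain ⟨d, hd, hdK⟩ := SetLike.exists_of_lt hKD
        intro hbot
        have : π d ∈ D.map π := Subgroup.mem_map_of_mem π hd
        rw [hbot, Subgroup.mem_bot] at this
        exact hdK ((hker d).mp this)
      have hD'eq : D.map π = B i := (hmin i).1.2.2 _ hD'norm hD'le hD'ne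
      have : D ⊔ K = (B i).comap π := by
        rw [← hD'eq, Subgroup.comap_map_eq, QuotientGroup.ker_mk']
      rw [sup_eq_left.mpr (le_of_lt hKD)] at this
      exact hDA.ne this
  · -- sup
    apply le_antisymm
    · refine sup_le hKN (iSup_le fun i => ?_)
      have := Subgroup.comap_mono (f := π) (hle i)
      rwa [Subgroup.comap_map_eq, QuotientGroup.ker_mk', sup_eq_left.mpr hKN] at this
    · intro x hx
      have h1 : π x ∈ (⨆ i, (B i).comap π).map π := by
        rw [Subgroup.map_iSup]
        have : ∀ i, ((B i).comap π).map π = B i :=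
          fun i => Subgroup.map_comap_eq_self_of_surjective hsurj _
        simp only [this]
        rw [show (⨆ i, B i) = N.map π from hsup]
        exact Subgroup.mem_map_of_mem π hx
      obtain ⟨c, hc, hceq⟩ := h1
      have hkmem : x * c⁻¹ ∈ K := by
        rw [← hker]
        rw [map_mul, map_inv, hceq, mul_inv_cancel]
      have : x = (x * c⁻¹) * c := by group
      rw [this]
      exact mul_mem (Subgroup.mem_sup_left hkmem) (Subgroup.mem_sup_right hc)
  · -- independence
    intro i
    apply le_antisymm
    · intro x hx
      rw [Subgroup.mem_inf] at hx
      obtain ⟨hx1, hx2⟩ := hx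
      have h2 : π x ∈ ⨆ j, ⨆ _ : j ≠ i, B j := by
        have hmem : π x ∈ (K ⊔ ⨆ j, ⨆ _ : j ≠ i, (B j).comap π).map π :=
          Subgroup.mem_map_of_mem π hx2
        rw [Subgroup.map_sup, hmapK, bot_sup_eq] at hmem
        simp only [Subgroup.map_iSup] at hmem
        have heq : ∀ j, ((B j).comap π).map π = B j :=
          fun j => Subgroup.map_comap_eq_self_of_surjective hsurj _
        simp only [heq] at hmem
        exact hmem
      have : π x ∈ B i ⊓ ⨆ j, ⨆ _ : j ≠ i, B j := ⟨hx1, h2⟩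
      rw [hind i, Subgroup.mem_bot] at this
      exact (hker x).mp this
    · refine le_inf ?_ le_sup_left
      intro x hx
      show π x ∈ B i
      rw [(hker x).mpr hx]
      exact (B i).one_mem

end Bridge2

end Stmt8Aux

/-- For a normal subgroup `N` of a finite group `G` and a prime `p`,
among all normal subgroups `K ≤ N` of `G` such that `N/K` is an internal direct
product of minimal normal `p`-subgroups of `G/K` there is a smallest one,
`Res_p(N,G)`. -/
theorem stmt8 (G : Type) [Group G] [Finite G] (N : Subgroup G) (hN : N.Normal)
    (p : ℕ) (hp : p.Prime) :
    ∃ (R : Subgroup G) (hR : R.Normal), R ≤ N ∧ QuotDirProdMinP G p N R hR ∧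
      ∀ (K : Subgroup G) (hK : K.Normal), K ≤ N → QuotDirProdMinP G p N K hK → R ≤ K := by
  classical
  haveI : Finite (Subgroup G) := Finite.of_injective (fun H => (H : Set G)) SetLike.coe_injective
  have hNgood : Stmt8Aux.Good p N N := Stmt8Aux.good_self p hN
  obtain ⟨R, hRmem, hRmin⟩ := Set.Finite.exists_minimalFor (id : Subgroup G → Subgroup G)
    {K : Subgroup G | Stmt8Aux.Good p N K} (Set.toFinite _) ⟨N, hNgood⟩
  have hRgood : Stmt8Aux.Good p N R := hRmem
  have key : ∀ K : Subgroup G, Stmt8Aux.Good p N K → R ≤ K := by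
    intro K hKg
    have hinf : Stmt8Aux.Good p N (R ⊓ K) := Stmt8Aux.good_inf hRgood hKg
    have heq : R = R ⊓ K := le_antisymm (hRmin hinf inf_le_left) inf_le_left
    calc R = R ⊓ K := heq
      _ ≤ K := inf_le_right
  exact ⟨R, hRgood.1, hRgood.2.1, Stmt8Aux.good_to_quot hp hRgood.1 hRgood,
    fun K hK hKN hq => key K (Stmt8Aux.quot_to_good hp hK hKN hq)⟩
end

section
/- Let f be a chief factor function and 𝔉 = C(f). Let G be a finite group with normal subgroups K ≤ N such that G/N ∈ 𝔉 and N/K is an internal direct product of subgroups N₁/K, …, N_t/K, each of which is a minimal normal subgroup of G/K. Let M be the subgroup generated by K together with all N_i for which f(N_i/K, G) = 0. Then M is a normal subgroup of G, G/M ∈ 𝔉, and M ≤ L for every normal subgroup L of G with K ≤ L and G/L ∈ 𝔉 (that is, M/K is the 𝔉-residual of G/K). -/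
open scoped commutatorElement

section Aux

open Subgroup Pointwise

/-- A subgroup generated by a family of normal subgroups is normal. -/
theorem normal_iSup_aux {G : Type} [Group G] {ι : Sort*} (S : ι → Subgroup G)
    (h : ∀ i, (S i).Normal) : (⨆ i, S i).Normal := by
  constructor
  intro n hn g
  refine Subgroup.iSup_induction S (C := fun x => g * x * g⁻¹ ∈ ⨆ i, S i) hn
    (fun i x hx => ?_) (by simpa using Subgroup.one_mem _) (fun x y hx hy => ?_)
  · exact le_iSup S i ((h i).conj_mem x hx g)
  · show g * (x * y) * g⁻¹ ∈ ⨆ i, S i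
    have : g * (x * y) * g⁻¹ = (g * x * g⁻¹) * (g * y * g⁻¹) := by group
    rw [this]
    exact Subgroup.mul_mem _ hx hy

theorem iSup_fin_succ_aux {α : Type*} [CompleteLattice α] {n : ℕ} (f : Fin (n + 1) → α) :
    (⨆ i, f i) = f 0 ⊔ ⨆ j : Fin n, f j.succ := by
  apply le_antisymm
  · refine iSup_le fun i => ?_
    refine Fin.cases le_sup_left (fun j => ?_) i
    exact (le_iSup (fun j : Fin n => f j.succ) j).trans le_sup_right
  · exact sup_le (le_iSup f 0) (iSup_le fun j => le_iSup f j.succ)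

/-- The second isomorphism theorem, as a `G`-isomorphism of factors. -/
theorem gIso_second {G : Type} [Group G] (A B : Subgroup G) (hA : A.Normal) (hB : B.Normal) :
    IsGIsomorphicFactors G A (A ⊓ B) (A ⊔ B) B := by
  haveI := hA; haveI := hB
  refine ⟨hA, Subgroup.normal_inf_normal A B, Subgroup.sup_normal A B, hB, ?_⟩
  haveI h1 : ((A ⊓ B).subgroupOf A).Normal := (Subgroup.normal_inf_normal A B).subgroupOf A
  haveI h2 : (B.subgroupOf (A ⊔ B)).Normal := hB.subgroupOf _
  set ψ : ↥A →* ↥(A ⊔ B) ⧸ B.subgroupOf (A ⊔ B) :=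
    (QuotientGroup.mk' (B.subgroupOf (A ⊔ B))).comp (Subgroup.inclusion le_sup_left) with hψ
  have hψ_apply : ∀ x : ↥A, ψ x = QuotientGroup.mk (Subgroup.inclusion le_sup_left x) :=
    fun x => rfl
  have hker : ∀ x ∈ (A ⊓ B).subgroupOf A, ψ x = 1 := by
    intro x hx
    rw [hψ_apply, QuotientGroup.eq_one_iff, Subgroup.mem_subgroupOf, Subgroup.coe_inclusion]
    exact (Subgroup.mem_subgroupOf.mp hx).2
  set φ₀ := QuotientGroup.lift ((A ⊓ B).subgroupOf A) ψ hker with hφ₀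
  have hφ₀_apply : ∀ x : ↥A, φ₀ (QuotientGroup.mk x)
      = QuotientGroup.mk (Subgroup.inclusion le_sup_left x) := fun x => rfl
  have hinj : Function.Injective φ₀ := by
    intro x y
    refine QuotientGroup.induction_on x fun a => QuotientGroup.induction_on y fun b h => ?_
    rw [hφ₀_apply, hφ₀_apply, QuotientGroup.eq] at h
    rw [Subgroup.mem_subgroupOf] at h
    simp only [Subgroup.coe_mul, Subgroup.coe_inv, Subgroup.coe_inclusion] at h
    rw [QuotientGroup.eq, Subgroup.mem_subgroupOf]
    exact ⟨Subgroup.mul_mem _ (Subgroup.inv_mem _ a.2) b.2, h⟩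
  have hsurj : Function.Surjective φ₀ := by
    intro z
    refine QuotientGroup.induction_on z fun w => ?_
    have hw : (w : G) ∈ ((A : Set G) * (B : Set G)) := by
      rw [← Subgroup.mul_normal]; exact w.2
    obtain ⟨a, ha, b, hb, hab⟩ := hw
    refine ⟨QuotientGroup.mk ⟨a, ha⟩, ?_⟩
    rw [hφ₀_apply, QuotientGroup.eq, Subgroup.mem_subgroupOf]
    simp only [Subgroup.coe_mul, Subgroup.coe_inv, Subgroup.coe_inclusion]
    have : (a : G)⁻¹ * w = b := by rw [← hab]; group
    rw [this]; exact hb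
  refine ⟨MulEquiv.ofBijective φ₀ ⟨hinj, hsurj⟩, ?_⟩
  intro g x y hxy
  have hxy' : φ₀ (QuotientGroup.mk x) = QuotientGroup.mk y := hxy
  rw [hφ₀_apply, QuotientGroup.eq, Subgroup.mem_subgroupOf] at hxy'
  simp only [Subgroup.coe_mul, Subgroup.coe_inv, Subgroup.coe_inclusion] at hxy'
  show φ₀ (QuotientGroup.mk (normalConj hA g x)) = _
  rw [hφ₀_apply, QuotientGroup.eq, Subgroup.mem_subgroupOf]
  simp only [Subgroup.coe_mul, Subgroup.coe_inv, Subgroup.coe_inclusion]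
  have hc : ((normalConj hA g x : ↥A) : G)⁻¹ * ((normalConj (Subgroup.sup_normal A B) g y : ↥(A ⊔ B)) : G)
      = g * ((x : G)⁻¹ * (y : G)) * g⁻¹ := by
    show (g * (x : G) * g⁻¹)⁻¹ * (g * (y : G) * g⁻¹) = _
    group
  rw [hc]
  exact hB.conj_mem _ hxy' g

/-- If `A/C` is a chief factor and `X` is a normal subgroup containing `C`,
then either `A ⊓ X = C` or `A ≤ X`. -/
theorem chief_inf_dichotomy {G : Type} [Group G] {A C : Subgroup G}
    (hch : IsChiefFactor G A C) (X : Subgroup G) (hX : X.Normal) (hCX : C ≤ X) :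
    A ⊓ X = C ∨ A ≤ X := by
  obtain ⟨hA, hC, hCA, hmax⟩ := hch
  haveI := hA; haveI := hX
  have h1 : C ≤ A ⊓ X := le_inf hCA.le hCX
  rcases eq_or_lt_of_le h1 with h | h
  · exact Or.inl h.symm
  · rcases eq_or_lt_of_le (inf_le_left : A ⊓ X ≤ A) with h' | h'
    · exact Or.inr (inf_eq_left.mp h')
    · exact ((hmax _ (Subgroup.normal_inf_normal A X) h h')).elim

/-- If `A/C` is chief, `B` is normal with `C ≤ B` and `A ⊓ B = C`, then
`(A ⊔ B)/B` is a chief factor. -/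
theorem chief_sup {G : Type} [Group G] {A C B : Subgroup G} (hch : IsChiefFactor G A C)
    (hB : B.Normal) (hCB : C ≤ B) (hAB : A ⊓ B = C) : IsChiefFactor G (A ⊔ B) B := by
  obtain ⟨hA, hC, hCA, hmax⟩ := hch
  haveI := hA; haveI := hB
  refine ⟨Subgroup.sup_normal A B, hB, ?_, ?_⟩
  · refine lt_of_le_of_ne le_sup_right fun e => ?_
    have hAle : A ≤ B := le_sup_left.trans e.ge
    have : A = C := by rw [← hAB, inf_eq_left.mpr hAle]
    exact hCA.ne this.symm
  · intro X hX h1 h2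
    haveI := hX
    have hXA : C ≤ X ⊓ A := le_inf (hCB.trans h1.le) hCA.le
    have hcases : X ⊓ A = C ∨ X ⊓ A = A := by
      rcases eq_or_lt_of_le hXA with h | h
      · exact Or.inl h.symm
      · rcases eq_or_lt_of_le (inf_le_right : X ⊓ A ≤ A) with h' | h'
        · exact Or.inr h'
        · exact (hmax _ (Subgroup.normal_inf_normal X A) h h').elim
    rcases hcases with h | h
    · -- X ≤ B, contradiction with B < X
      have hXB : X ≤ B := by
        intro x hx
        have hx' : x ∈ ((A : Set G) * (B : Set G)) := by
          rw [← Subgroup.mul_normal]; exact h2.le hx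
        obtain ⟨a, ha, b, hb, hab⟩ := hx'
        have haX : a ∈ X := by
          have : a = x * b⁻¹ := by rw [← hab]; group
          rw [this]
          exact X.mul_mem hx (X.inv_mem (h1.le hb))
        have haC : a ∈ C := by rw [← h]; exact ⟨haX, ha⟩
        rw [← hab]
        exact B.mul_mem (hCB haC) hb
      exact (h1.not_ge hXB)
    · have : A ⊔ B ≤ X := sup_le (inf_eq_right.mp h) h1.le
      exact h2.not_ge this

/-- Chief factors map to chief factors under quotient maps. -/
theorem chief_map_s10 {G : Type} [Group G] (L H K : Subgroup G) [hL : L.Normal]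
    (hLK : L ≤ K) (h : IsChiefFactor G H K) :
    IsChiefFactor (G ⧸ L) (H.map (QuotientGroup.mk' L)) (K.map (QuotientGroup.mk' L)) := by
  obtain ⟨hH, hK, hKH, hmax⟩ := h
  have hsur := QuotientGroup.mk'_surjective L
  have hcm : ∀ X : Subgroup G, L ≤ X →
      (X.map (QuotientGroup.mk' L)).comap (QuotientGroup.mk' L) = X := by
    intro X hX
    exact Subgroup.comap_map_eq_self (by rwa [QuotientGroup.ker_mk'])
  refine ⟨hH.map _ hsur, hK.map _ hsur, ?_, ?_⟩
  · refine lt_of_le_of_ne (Subgroup.map_mono hKH.le) fun e => ?_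
    have : K = H := by
      rw [← hcm K hLK, ← hcm H (hLK.trans hKH.le), e]
    exact hKH.ne this
  · intro X' hX' h1 h2
    set X := X'.comap (QuotientGroup.mk' L) with hXdef
    have hXmap : X.map (QuotientGroup.mk' L) = X' :=
      Subgroup.map_comap_eq_self_of_surjective hsur X'
    have hKX : K < X := by
      refine lt_of_le_of_ne ?_ fun e => ?_
      · rw [← hcm K hLK]; exact Subgroup.comap_mono h1.le
      · have : K.map (QuotientGroup.mk' L) = X' := by rw [e]; exact hXmap
        exact h1.ne this
    have hXH : X < H := by
      refine lt_of_le_of_ne ?_ fun e => ?_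
      · have := Subgroup.comap_mono (f := QuotientGroup.mk' L) h2.le
        rwa [hcm H (hLK.trans hKH.le)] at this
      · have : H.map (QuotientGroup.mk' L) = X' := by rw [← e]; exact hXmap
        exact h2.ne this.symm
    exact hmax X (hX'.comap _) hKX hXH

/-- Chief factors of a quotient come from chief factors of the group. -/
theorem chief_comap_s10 {G : Type} [Group G] (L : Subgroup G) [hL : L.Normal]
    (H' K' : Subgroup (G ⧸ L)) (h : IsChiefFactor (G ⧸ L) H' K') :
    IsChiefFactor G (H'.comap (QuotientGroup.mk' L)) (K'.comap (QuotientGroup.mk' L)) ∧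
    L ≤ K'.comap (QuotientGroup.mk' L) ∧
    (H'.comap (QuotientGroup.mk' L)).map (QuotientGroup.mk' L) = H' ∧
    (K'.comap (QuotientGroup.mk' L)).map (QuotientGroup.mk' L) = K' := by
  obtain ⟨hH, hK, hKH, hmax⟩ := h
  have hsur := QuotientGroup.mk'_surjective L
  have hmc : ∀ X' : Subgroup (G ⧸ L),
      (X'.comap (QuotientGroup.mk' L)).map (QuotientGroup.mk' L) = X' :=
    Subgroup.map_comap_eq_self_of_surjective hsur
  have hLle : ∀ X' : Subgroup (G ⧸ L), L ≤ X'.comap (QuotientGroup.mk' L) := by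
    intro X'
    have h := Subgroup.ker_le_comap (f := QuotientGroup.mk' L) X'
    rwa [QuotientGroup.ker_mk'] at h
  refine ⟨⟨hH.comap _, hK.comap _, ?_, ?_⟩, hLle K', hmc H', hmc K'⟩
  · refine lt_of_le_of_ne (Subgroup.comap_mono hKH.le) fun e => ?_
    have : K' = H' := by rw [← hmc K', ← hmc H', e]
    exact hKH.ne this
  · intro X hX h1 h2
    have hLX : L ≤ X := (hLle K').trans h1.le
    have hXc : (X.map (QuotientGroup.mk' L)).comap (QuotientGroup.mk' L) = X :=
      Subgroup.comap_map_eq_self (by rwa [QuotientGroup.ker_mk'])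
    have h1' : K' < X.map (QuotientGroup.mk' L) := by
      refine lt_of_le_of_ne ?_ fun e => ?_
      · rw [← hmc K']; exact Subgroup.map_mono h1.le
      · exact h1.ne (by rw [e]; exact hXc)
    have h2' : X.map (QuotientGroup.mk' L) < H' := by
      refine lt_of_le_of_ne ?_ fun e => ?_
      · rw [← hmc H']; exact Subgroup.map_mono h2.le
      · exact h2.ne (by rw [← e]; exact hXc.symm)
    exact hmax _ (hX.map _ hsur) h1' h2'

/-- If `G/L ∈ C(f)` then every chief factor of `G` above `L` has `f`-value 1. -/
theorem quot_true (f : ChiefFactorFun) (hf : IsChiefFactorFun f) (G : Type) [Group G]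
    [Finite G] (L H K : Subgroup G) (hLn : L.Normal) (hLK : L ≤ K)
    (hC : CClassQuot f G L hLn) (h : IsChiefFactor G H K) : f G H K = true := by
  haveI := hLn
  rw [hf.quot_inv G H K L h hLK]
  exact hC _ _ (chief_map_s10 L H K hLK h)

/-- A subgroup whose image in `G/K` is minimal normal gives a chief factor `A/K`. -/
theorem minimal_chief_quot {G : Type} [Group G] (K A : Subgroup G) [hK : K.Normal]
    (hKA : K ≤ A) (h : IsMinimalNormal (A.map (QuotientGroup.mk' K))) :
    IsChiefFactor G A K := by
  obtain ⟨hn, hne, hmin⟩ := h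
  have hchq : IsChiefFactor (G ⧸ K) (A.map (QuotientGroup.mk' K)) ⊥ := by
    refine ⟨hn, (by infer_instance : (⊥ : Subgroup (G ⧸ K)).Normal), bot_lt_iff_ne_bot.mpr hne, ?_⟩
    intro B hB h1 h2
    exact h2.ne (hmin B hB h2.le (bot_lt_iff_ne_bot.mp h1))
  have := (chief_comap_s10 K (A.map (QuotientGroup.mk' K)) ⊥ hchq).1
  have hA : (A.map (QuotientGroup.mk' K)).comap (QuotientGroup.mk' K) = A :=
    Subgroup.comap_map_eq_self (by rwa [QuotientGroup.ker_mk'])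
  have hbot : (⊥ : Subgroup (G ⧸ K)).comap (QuotientGroup.mk' K) = K := by
    rw [MonoidHom.comap_bot, QuotientGroup.ker_mk']
  rwa [hA, hbot] at this

/-- Main induction: if `N/M` is generated by chief factors of `f`-value 1 above `M`
and `G/N ∈ C(f)`, then every chief factor of `G` above `M` has `f`-value 1. -/
theorem main_aux (f : ChiefFactorFun) (hf : IsChiefFactorFun f)
    (G : Type) [Group G] [Finite G] :
    ∀ (s : ℕ) (M N : Subgroup G) (hM : M.Normal) (hN : N.Normal),
      M ≤ N → CClassQuot f G N hN →
      ∀ P : Fin s → Subgroup G,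
        (∀ i, M ≤ P i) → (∀ i, P i ≤ N) →
        (∀ i, P i = M ∨ (IsChiefFactor G (P i) M ∧ f G (P i) M = true)) →
        N = M ⊔ ⨆ i, P i →
        ∀ H K', IsChiefFactor G H K' → M ≤ K' → f G H K' = true := by
  intro s
  induction s with
  | zero =>
    intro M N hM hN hMN hCN P _ _ _ hgen H K' hch hMK'
    have hNM : N = M := by rw [hgen, iSup_of_empty, sup_bot_eq]
    exact quot_true f hf G N H K' hN (hNM ▸ hMK') hCN hch
  | succ s ih =>
    intro M N hM hN hMN hCN P hMP hPN hPch hgen H K' hch hMK'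
    rcases hPch 0 with h0 | ⟨h0ch, h0f⟩
    · refine ih M N hM hN hMN hCN (fun j => P j.succ) (fun j => hMP _) (fun j => hPN _)
        (fun j => hPch _) ?_ H K' hch hMK'
      rw [hgen, iSup_fin_succ_aux, h0, ← sup_assoc, sup_idem]
    · obtain ⟨P₀, hP₀def⟩ : ∃ Q, Q = P 0 := ⟨P 0, rfl⟩
      rw [← hP₀def] at h0ch h0f
      have hP₀N : P₀ ≤ N := by rw [hP₀def]; exact hPN 0
      have hMP₀ : M ≤ P₀ := by rw [hP₀def]; exact hMP 0
      haveI hP₀ : P₀.Normal := h0ch.1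
      have key : ∀ H K', IsChiefFactor G H K' → P₀ ≤ K' → f G H K' = true := by
        refine ih P₀ N hP₀ hN hP₀N hCN (fun j => P₀ ⊔ P j.succ) (fun j => le_sup_left)
          (fun j => sup_le hP₀N (hPN _)) ?_ ?_
        · intro j
          show P₀ ⊔ P j.succ = P₀ ∨ (IsChiefFactor G (P₀ ⊔ P j.succ) P₀ ∧ f G (P₀ ⊔ P j.succ) P₀ = true)
          rcases hPch j.succ with hj | ⟨hjch, hjf⟩
          · left; rw [hj]; exact sup_eq_left.mpr hMP₀
          · by_cases hle : P j.succ ≤ P₀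
            · left; exact sup_eq_left.mpr hle
            · right
              have hinf : P j.succ ⊓ P₀ = M := by
                rcases chief_inf_dichotomy hjch P₀ hP₀ hMP₀ with h | h
                · exact h
                · exact absurd h hle
              have hc := chief_sup hjch hP₀ hMP₀ hinf
              have giso := gIso_second (P j.succ) P₀ hjch.1 hP₀
              rw [hinf] at giso
              have hfeq := hf.iso_inv G (P j.succ) M (P j.succ ⊔ P₀) P₀ hjch hc giso
              constructor
              · rw [sup_comm]; exact hc
              · rw [sup_comm P₀ (P j.succ), ← hfeq]; exact hjf
        · show N = P₀ ⊔ ⨆ j : Fin s, (P₀ ⊔ P j.succ)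
          rw [hgen, iSup_fin_succ_aux, ← hP₀def]
          apply le_antisymm
          · refine sup_le (hMP₀.trans le_sup_left) (sup_le le_sup_left ?_)
            refine iSup_le fun j => ?_
            exact le_sup_of_le_right (le_iSup_of_le j le_sup_right)
          · refine sup_le (le_sup_of_le_right le_sup_left) ?_
            refine iSup_le fun j => sup_le (le_sup_of_le_right le_sup_left) ?_
            exact le_sup_of_le_right (le_sup_of_le_right (le_iSup (fun j : Fin s => P j.succ) j))
      by_cases hPK : P₀ ≤ K'
      · exact key H K' hch hPK
      · haveI hK'n := hch.2.1
        have hinf : P₀ ⊓ K' = M := by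
          rcases chief_inf_dichotomy h0ch K' hch.2.1 hMK' with h | h
          · exact h
          · exact absurd h hPK
        have hcsup : IsChiefFactor G (P₀ ⊔ K') K' := chief_sup h0ch hch.2.1 hMK' hinf
        have gisoP := gIso_second P₀ K' hP₀ hch.2.1
        rw [hinf] at gisoP
        by_cases hHle : H ≤ P₀ ⊔ K'
        · have hHeq : H = P₀ ⊔ K' := by
            rcases eq_or_lt_of_le hHle with h | h
            · exact h
            · exact ((hcsup.2.2.2 H hch.1 hch.2.2.1 h)).elim
          have hfeq := hf.iso_inv G P₀ M (P₀ ⊔ K') K' h0ch hcsup gisoP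
          rw [hHeq, ← hfeq]; exact h0f
        · haveI : (P₀ ⊔ K').Normal := Subgroup.sup_normal P₀ K'
          have hinf2 : H ⊓ (P₀ ⊔ K') = K' := by
            rcases chief_inf_dichotomy hch (P₀ ⊔ K') (Subgroup.sup_normal P₀ K')
              le_sup_right with h | h
            · exact h
            · exact absurd h hHle
          have hc2 : IsChiefFactor G (H ⊔ (P₀ ⊔ K')) (P₀ ⊔ K') :=
            chief_sup hch (Subgroup.sup_normal P₀ K') le_sup_right hinf2
          have giso2 := gIso_second H (P₀ ⊔ K') hch.1 (Subgroup.sup_normal P₀ K')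
          rw [hinf2] at giso2
          rw [hf.iso_inv G H K' (H ⊔ (P₀ ⊔ K')) (P₀ ⊔ K') hch hc2 giso2]
          exact key _ _ hc2 le_sup_left

end Aux

/-- Let `f` be a chief factor function and `𝔉 = C(f)`. Let `G` be a
finite group with normal subgroups `K ≤ N` such that `G/N ∈ 𝔉` and `N/K` is an
internal direct product of subgroups `N₁/K, …, N_t/K`, each a minimal normal subgroup
of `G/K`. Let `M` be generated by `K` and all `N_i` with `f(N_i/K, G) = 0`. Then `M` is
normal in `G`, `G/M ∈ 𝔉`, and `M ≤ L` for every normal subgroup `L` of `G` with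
`K ≤ L` and `G/L ∈ 𝔉`. -/
theorem stmt10 (f : ChiefFactorFun) (hf : IsChiefFactorFun f)
    (G : Type) [Group G] [Finite G] (N K : Subgroup G) [hN : N.Normal] [hK : K.Normal]
    (hKN : K ≤ N) (hGN : CClass f (G ⧸ N))
    (t : ℕ) (Ni : Fin t → Subgroup G)
    (hKNi : ∀ i, K ≤ Ni i) (hNiN : ∀ i, Ni i ≤ N)
    (hmin : ∀ i, IsMinimalNormal ((Ni i).map (QuotientGroup.mk' K)))
    (hdp : IsInternalDirectProduct (N.map (QuotientGroup.mk' K))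
      (fun i => (Ni i).map (QuotientGroup.mk' K)))
    (M : Subgroup G)
    (hM : M = K ⊔ ⨆ (i : Fin t) (_ : f G (Ni i) K = false), Ni i) :
    ∃ hMn : M.Normal, CClassQuot f G M hMn ∧
      ∀ (L : Subgroup G) (hL : L.Normal), K ≤ L → CClassQuot f G L hL → M ≤ L := by
  
  haveI := hK
  have hker : (QuotientGroup.mk' K).ker = K := QuotientGroup.ker_mk' K
  have hNin : ∀ i, (Ni i).Normal := by
    intro i
    have h1 : (((Ni i).map (QuotientGroup.mk' K)).comap (QuotientGroup.mk' K)).Normal :=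
      (hmin i).1.comap _
    rwa [Subgroup.comap_map_eq_self (by rw [hker]; exact hKNi i)] at h1
  have hchief : ∀ i, IsChiefFactor G (Ni i) K := fun i =>
    minimal_chief_quot K (Ni i) (hKNi i) (hmin i)
  have hMn : M.Normal := by
    rw [hM]
    haveI : (⨆ (i : Fin t) (_ : f G (Ni i) K = false), Ni i).Normal :=
      normal_iSup_aux _ fun i => normal_iSup_aux _ fun _ => hNin i
    exact Subgroup.sup_normal K _
  have hKM : K ≤ M := by rw [hM]; exact le_sup_left
  have hMN : M ≤ N := by
    rw [hM]
    exact sup_le hKN (iSup_le fun i => iSup_le fun _ => hNiN i)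
  have hmapKbot : K.map (QuotientGroup.mk' K) = ⊥ :=
    (Subgroup.map_eq_bot_iff _).mpr (le_of_eq hker.symm)
  have hNgen : N = K ⊔ ⨆ i, Ni i := by
    have hmapeq : ((K ⊔ ⨆ i, Ni i).map (QuotientGroup.mk' K)) = N.map (QuotientGroup.mk' K) := by
      rw [Subgroup.map_sup, Subgroup.map_iSup, ← hdp.2.2.1, hmapKbot, bot_sup_eq]
    have h1 := congrArg (Subgroup.comap (QuotientGroup.mk' K)) hmapeq
    rwa [Subgroup.comap_map_eq_self (by rw [hker]; exact le_sup_left),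
      Subgroup.comap_map_eq_self (by rw [hker]; exact hKN), eq_comm] at h1
  have hNiM : ∀ i, f G (Ni i) K = true → Ni i ⊓ M = K := by
    intro i hfi
    rcases chief_inf_dichotomy (hchief i) M hMn hKM with h | h
    · exact h
    · exfalso
      have hmapM : M.map (QuotientGroup.mk' K) ≤
          ⨆ (j) (_ : j ≠ i), (Ni j).map (QuotientGroup.mk' K) := by
        rw [hM, Subgroup.map_sup, hmapKbot, bot_sup_eq, Subgroup.map_iSup]
        refine iSup_le fun j => ?_
        rw [Subgroup.map_iSup]
        refine iSup_le fun hj => ?_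
        have hji : j ≠ i := by rintro rfl; rw [hfi] at hj; simp at hj
        exact le_iSup_of_le j (le_iSup_of_le hji le_rfl)
      have h2 : (Ni i).map (QuotientGroup.mk' K) ≤ ⊥ := by
        rw [← hdp.2.2.2 i]
        exact le_inf le_rfl ((Subgroup.map_mono h).trans hmapM)
      exact (hmin i).2.1 (le_bot_iff.mp h2)
  have hNgen2 : N = M ⊔ ⨆ i, (M ⊔ Ni i) := by
    apply le_antisymm
    · rw [hNgen]
      refine sup_le (hKM.trans le_sup_left) (iSup_le fun i => ?_)
      exact le_sup_of_le_right (le_iSup_of_le i le_sup_right)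
    · exact sup_le hMN (iSup_le fun i => sup_le hMN (hNiN i))
  have hfam : ∀ i : Fin t, (M ⊔ Ni i) = M ∨
      (IsChiefFactor G (M ⊔ Ni i) M ∧ f G (M ⊔ Ni i) M = true) := by
    intro i
    by_cases hfi : f G (Ni i) K = false
    · left
      have hle : Ni i ≤ M := by
        rw [hM]
        exact le_sup_of_le_right (le_iSup_of_le i (le_iSup_of_le hfi le_rfl))
      exact sup_eq_left.mpr hle
    · right
      have hfi' : f G (Ni i) K = true := by revert hfi; cases f G (Ni i) K <;> simp
      have hinf := hNiM i hfi'
      have hc := chief_sup (hchief i) hMn hKM hinf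
      have giso := gIso_second (Ni i) M (hNin i) hMn
      rw [hinf] at giso
      have hfeq := hf.iso_inv G (Ni i) K (Ni i ⊔ M) M (hchief i) hc giso
      constructor
      · rw [sup_comm]; exact hc
      · rw [sup_comm M (Ni i), ← hfeq]; exact hfi'
  have main := main_aux f hf G t M N hMn hN hMN hGN (fun i => M ⊔ Ni i)
    (fun i => le_sup_left) (fun i => sup_le hMN (hNiN i)) hfam hNgen2
  refine ⟨hMn, ?_, ?_⟩
  · show CClass f (G ⧸ M)
    intro H' K' hch'
    haveI := hMn
    obtain ⟨hchG, hMle, hmapH, hmapK⟩ := chief_comap_s10 M H' K' hch'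
    have hq := hf.quot_inv G (H'.comap (QuotientGroup.mk' M))
      (K'.comap (QuotientGroup.mk' M)) M hchG hMle
    rw [hmapH, hmapK] at hq
    rw [← hq]
    exact main _ _ hchG hMle
  · intro L hL hKL hCL
    rw [hM]
    refine sup_le hKL (iSup_le fun i => iSup_le fun hfi => ?_)
    rcases chief_inf_dichotomy (hchief i) L hL hKL with hinf | hle
    · exfalso
      have hc := chief_sup (hchief i) hL hKL hinf
      have giso := gIso_second (Ni i) L (hNin i) hL
      rw [hinf] at giso
      have hfeq := hf.iso_inv G (Ni i) K (Ni i ⊔ L) L (hchief i) hc giso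
      have htrue := quot_true f hf G L (Ni i ⊔ L) L hL le_rfl hCL hc
      rw [← hfeq, hfi] at htrue
      exact Bool.false_ne_true htrue
    · exact hle
end

section
/- Let 𝔉 be a non-empty formation, G a finite group, and X a K-𝔉-subnormal subgroup of G. If the normal closure X^G equals G and X·G^𝔉 = G, then X = G. -/
open scoped commutatorElement

/-- Let `𝔉` be a non-empty formation, `G` a finite group and `X` a
K-`𝔉`-subnormal subgroup of `G`. If `X^G = G` and `X ⬝ G^𝔉 = G`, then `X = G`. -/
theorem stmt16 (𝔉 : GroupClass) (hform : IsFormation 𝔉) (hne : GroupClassNonempty 𝔉)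
    (G : Type) [Group G] [Finite G] (X : Subgroup G) (hX : IsKFSubnormal 𝔉 G X)
    (R : Subgroup G) (hR : IsResidual 𝔉 G R)
    (h1 : Subgroup.normalClosure (X : Set G) = ⊤) (h2 : X ⊔ R = ⊤) :
    X = ⊤ := by
  obtain ⟨n, c, hc0, hcn, hstep⟩ := hX
  obtain ⟨hRnorm, hRquot, hRmin⟩ := hR
  have hle : ∀ i ≤ n, X ≤ c i := by
    intro i hi
    induction i with
    | zero => rw [hc0]
    | succ j ih =>
      exact (ih (Nat.le_of_succ_le hi)).trans (hstep j (Nat.lt_of_succ_le hi)).1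
  have key : ∀ k, k ≤ n → c (n - k) = ⊤ := by
    intro k
    induction k with
    | zero => intro _; simpa using hcn
    | succ m ih =>
      intro hk
      have hm : m ≤ n := Nat.le_of_succ_le hk
      have hsucc : n - m = (n - (m + 1)) + 1 := by omega
      have htop : c ((n - (m + 1)) + 1) = ⊤ := by rw [← hsucc]; exact ih hm
      set i := n - (m + 1) with hi
      have hlt : i < n := by omega
      obtain ⟨hsub, hcase⟩ := hstep i hlt
      rw [htop] at hsub hcase
      have hXle : X ≤ c i := hle i (Nat.le_of_lt hlt)
      rcases hcase with hnorm | hF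
      · -- c i is normal in ⊤, hence normal in G
        have hnormG : (c i).Normal := by
          constructor
          intro x hx g
          have hmem : (⟨x, Subgroup.mem_top x⟩ : ↥(⊤ : Subgroup G)) ∈
              (c i).subgroupOf ⊤ := by
            simpa [Subgroup.mem_subgroupOf] using hx
          have := hnorm.conj_mem _ hmem ⟨g, Subgroup.mem_top g⟩
          simpa [Subgroup.mem_subgroupOf] using this
        have : (⊤ : Subgroup G) ≤ c i := by
          rw [← h1]
          exact Subgroup.normalClosure_le_normal hXle
        exact le_antisymm le_top this
      · -- quotient case
        set K := ((c i).subgroupOf (⊤ : Subgroup G)).normalCore with hK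
        haveI : K.Normal := Subgroup.normalCore_normal _
        set e := Subgroup.topEquiv (G := G) with he
        set K' := K.map e.toMonoidHom with hK'
        haveI hK'norm : K'.Normal :=
          Subgroup.Normal.map ‹K.Normal› e.toMonoidHom e.surjective
        have hiso : (↥(⊤ : Subgroup G) ⧸ K) ≃* (G ⧸ K') :=
          QuotientGroup.congr K K' e rfl
        have hFq : 𝔉 (G ⧸ K') := hform.iso_closed _ _ hiso hF
        have hRle : R ≤ K' := hRmin K' hK'norm hFq
        have hK'le : K' ≤ c i := by
          rintro y ⟨x, hx, rfl⟩
          have := Subgroup.normalCore_le ((c i).subgroupOf (⊤ : Subgroup G)) hx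
          exact (by simpa [Subgroup.mem_subgroupOf] using this : (x : G) ∈ c i)
        have : (⊤ : Subgroup G) ≤ c i := by
          rw [← h2]
          exact sup_le hXle (hRle.trans hK'le)
        exact le_antisymm le_top this
  have := key n le_rfl
  simpa [hc0] using this
end
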